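/- arXiv:1303.3194 — 4 statements merged into one kernel-verified Lean document; each statement's English description precedes it below -/
import Mathlib

section
/- Let μ be a probability measure on a finite set Y, and L : Y → ℝ a positive function (the likelihood ratio) satisfying the symmetry condition: for every value ℓ, μ{y : L(y) = ℓ} = (1/ℓ)·μ{y : L(y) = 1/ℓ}. Then on the product space Y × Y with product measure μ ⊗ μ and L⁺(y₁,y₂) = L(y₁)L(y₂), the half-weighted probability satisfies P[L⁺ ⪇ 1] = P[L ⪇ 1]² + Σ_{ℓ₁ ⪈ 1, ℓ₂ ⪈ 1} μ[L=ℓ₁]μ[L=ℓ₂]·max{ℓ₁,ℓ₂}, where the sum over ℓ ⪈ 1 counts values ℓ > 1 with full weight and the value ℓ = 1 with half weight. -/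
open Finset

/-- mass of the likelihood-ratio value `ℓ` under output distribution `w`: `μ[L = ℓ]`. -/
noncomputable def pm {Y : Type*} [Fintype Y] (w L : Y → ℝ) (ℓ : ℝ) : ℝ :=
  ∑ y, if L y = ℓ then w y else 0

/-- `P[L < 1]` -/
noncomputable def Plt {Y : Type*} [Fintype Y] (w L : Y → ℝ) : ℝ :=
  ∑ y, if L y < 1 then w y else 0

/-- `P[L > 1]` -/
noncomputable def Pgt {Y : Type*} [Fintype Y] (w L : Y → ℝ) : ℝ :=
  ∑ y, if 1 < L y then w y else 0

/-- `P[L = 1]` -/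
noncomputable def Peq {Y : Type*} [Fintype Y] (w L : Y → ℝ) : ℝ :=
  ∑ y, if L y = 1 then w y else 0

/-- half-weighted probability `P[L ⪇ 1] = P[L<1] + P[L=1]/2` -/
noncomputable def Plneq {Y : Type*} [Fintype Y] (w L : Y → ℝ) : ℝ :=
  Plt w L + Peq w L / 2

/-- half-weighted probability `P[L ⪈ 1] = P[L>1] + P[L=1]/2` -/
noncomputable def Pgneq {Y : Type*} [Fintype Y] (w L : Y → ℝ) : ℝ :=
  Pgt w L + Peq w L / 2

/-- half-weighted double sum `Σ_{ℓ₁⪈1, ℓ₂⪈1} μ[L=ℓ₁]μ[L=ℓ₂] f(ℓ₁,ℓ₂)`: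
values `> 1` with full weight, the value `1` with half weight. -/
noncomputable def hwSum {Y : Type*} [Fintype Y] (w L : Y → ℝ) (f : ℝ → ℝ → ℝ) : ℝ :=
  (∑ l1 ∈ (Finset.image L Finset.univ).filter (fun l => 1 < l),
    ∑ l2 ∈ (Finset.image L Finset.univ).filter (fun l => 1 < l),
      pm w L l1 * pm w L l2 * f l1 l2)
  + Peq w L * ∑ l ∈ (Finset.image L Finset.univ).filter (fun l => 1 < l), pm w L l * f l 1
  + (1 / 4) * Peq w L ^ 2 * f 1 1

/-- `P[L⁺ ⪇ 1]` on the product space with `L⁺(y₁,y₂) = L(y₁)L(y₂)`. -/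
noncomputable def PplusLneq {Y : Type*} [Fintype Y] (w L : Y → ℝ) : ℝ :=
  (∑ y1, ∑ y2, if L y1 * L y2 < 1 then w y1 * w y2 else 0)
  + (∑ y1, ∑ y2, if L y1 * L y2 = 1 then w y1 * w y2 else 0) / 2

/-- `P[L⁺ ⪈ 1]` on the product space with `L⁺(y₁,y₂) = L(y₁)L(y₂)`. -/
noncomputable def PplusGneq {Y : Type*} [Fintype Y] (w L : Y → ℝ) : ℝ :=
  (∑ y1, ∑ y2, if 1 < L y1 * L y2 then w y1 * w y2 else 0)
  + (∑ y1, ∑ y2, if L y1 * L y2 = 1 then w y1 * w y2 else 0) / 2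


noncomputable def eaux : ℝ → ℝ := fun t => (if t < 1 then 1 else 0) + (if t = 1 then 1 else 0)/2

lemma eaux_of_lt {t : ℝ} (h : t < 1) : eaux t = 1 := by
  simp [eaux, h, ne_of_lt h]

lemma eaux_of_gt {t : ℝ} (h : 1 < t) : eaux t = 0 := by
  simp [eaux, lt_asymm h, ne_of_gt h]

lemma eaux_one : eaux 1 = 1/2 := by
  simp [eaux]

lemma key_lemma (S : Finset ℝ) (μ : ℝ → ℝ)
    (hpos : ∀ l ∈ S, 0 < l)
    (hinv : ∀ l ∈ S, 1/l ∈ S)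
    (hzero : ∀ l, l ∉ S → μ l = 0)
    (hsym : ∀ l ∈ S, μ (1/l) = l * μ l) :
    (∑ l1 ∈ S, ∑ l2 ∈ S, μ l1 * μ l2 * eaux (l1*l2))
    = (∑ l ∈ S.filter (· < 1), μ l + μ 1 / 2)^2
      + ((∑ l1 ∈ S.filter (fun l => 1 < l), ∑ l2 ∈ S.filter (fun l => 1 < l),
            μ l1 * μ l2 * max l1 l2)
         + μ 1 * (∑ l ∈ S.filter (fun l => 1 < l), μ l * l) + 1/4 * (μ 1)^2) := by
  -- split lemma
  have hS3 : ∀ F : ℝ → ℝ, ∑ l ∈ S, F l =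
      (∑ l ∈ S.filter (· < 1), F l) + (∑ l ∈ S.filter (· = 1), F l)
      + (∑ l ∈ S.filter (fun l => 1 < l), F l) := by
    intro F
    rw [← Finset.sum_filter_add_sum_filter_not S (· < 1) F]
    have h2 : S.filter (fun l => ¬ l < 1) =
        S.filter (· = 1) ∪ S.filter (fun l => 1 < l) := by
      ext x
      simp only [Finset.mem_filter, Finset.mem_union, not_lt]
      constructor
      · rintro ⟨hx, h⟩
        rcases eq_or_lt_of_le h with h' | h'
        · exact Or.inl ⟨hx, h'.symm⟩
        · exact Or.inr ⟨hx, h'⟩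
      · rintro (⟨hx, h⟩ | ⟨hx, h⟩)
        · exact ⟨hx, le_of_eq h.symm⟩
        · exact ⟨hx, le_of_lt h⟩
    have hdisj : Disjoint (S.filter (· = 1)) (S.filter (fun l : ℝ => 1 < l)) := by
      rw [Finset.disjoint_left]
      intro x hx hx'
      simp only [Finset.mem_filter] at hx hx'
      rw [hx.2] at hx'
      exact lt_irrefl 1 hx'.2
    rw [h2, Finset.sum_union hdisj]
    ring
  -- middle filter evaluation
  have hmid : ∀ c : ℝ → ℝ, (∑ l ∈ S.filter (· = 1), μ l * c l) = μ 1 * c 1 := by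
    intro c
    by_cases h1 : (1:ℝ) ∈ S
    · have : S.filter (· = 1) = {1} := by
        ext x
        simp only [Finset.mem_filter, Finset.mem_singleton]
        constructor
        · rintro ⟨_, h⟩; exact h
        · rintro rfl; exact ⟨h1, rfl⟩
      rw [this, Finset.sum_singleton]
    · have : S.filter (· = 1) = ∅ := by
        ext x
        simp only [Finset.mem_filter, Finset.notMem_empty, iff_false, not_and]
        rintro hx rfl; exact h1 hx
      rw [this, Finset.sum_empty, hzero 1 h1, zero_mul]
  -- bijection lemma
  have hbij : ∀ F : ℝ → ℝ, ∑ l ∈ S.filter (· < 1), F l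
      = ∑ m ∈ S.filter (fun l => 1 < l), F (1/m) := by
    intro F
    apply Finset.sum_nbij' (fun l => 1/l) (fun m => 1/m)
    · intro a ha
      simp only [Finset.mem_filter] at ha ⊢
      exact ⟨hinv a ha.1, one_lt_one_div (hpos a ha.1) ha.2⟩
    · intro a ha
      simp only [Finset.mem_filter] at ha ⊢
      refine ⟨hinv a ha.1, ?_⟩
      rw [div_lt_one (hpos a ha.1)]
      exact ha.2
    · intro a ha; simp only [one_div, inv_inv]
    · intro a ha; simp only [one_div, inv_inv]
    · intro a ha; rw [one_div_one_div]
  -- abbreviations (as plain terms)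
  set A := ∑ l ∈ S.filter (· < 1), μ l with hA
  set B := μ 1 with hB
  set X := ∑ m ∈ S.filter (fun l => 1 < l), ∑ l ∈ S.filter (fun l => 1 < l),
      μ m * μ l * (m * (if l < m then 1 else 0) + m * (if l = m then 1 else 0)/2) with hX
  set D := ∑ l1 ∈ S.filter (fun l => 1 < l), ∑ l2 ∈ S.filter (fun l => 1 < l),
      μ l1 * μ l2 * max l1 l2 with hD
  -- facts about memberships
  have hmem_lt : ∀ l ∈ S.filter (· < 1), l ∈ S ∧ 0 < l ∧ l < 1 := by
    intro l hl
    simp only [Finset.mem_filter] at hl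
    exact ⟨hl.1, hpos l hl.1, hl.2⟩
  have hmem_gt : ∀ l ∈ S.filter (fun l => 1 < l), l ∈ S ∧ 0 < l ∧ 1 < l := by
    intro l hl
    simp only [Finset.mem_filter] at hl
    exact ⟨hl.1, hpos l hl.1, hl.2⟩
  -- (1) cross block (<, >) equals X
  have hcross : (∑ l1 ∈ S.filter (· < 1), ∑ l2 ∈ S.filter (fun l => 1 < l),
      μ l1 * μ l2 * eaux (l1*l2)) = X := by
    rw [hbij (fun l1 => ∑ l2 ∈ S.filter (fun l => 1 < l), μ l1 * μ l2 * eaux (l1*l2))]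
    apply Finset.sum_congr rfl
    intro m hm
    obtain ⟨hmS, hm0, hm1⟩ := hmem_gt m hm
    apply Finset.sum_congr rfl
    intro l hl
    obtain ⟨hlS, hl0, hl1⟩ := hmem_gt l hl
    have hsymm : μ (1/m) = m * μ m := hsym m hmS
    have hml : 1/m * l = l/m := by ring
    have he : l/m = 1 ↔ l = m := by
      constructor
      · intro h; field_simp at h; linarith
      · intro h; rw [h, div_self hm0.ne']
    have hc1 : (if 1/m * l < 1 then (1:ℝ) else 0) = (if l < m then 1 else 0) := by
      rw [hml]
      by_cases h : l < m
      · rw [if_pos ((div_lt_one hm0).mpr h), if_pos h]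
      · rw [if_neg (fun hh => h ((div_lt_one hm0).mp hh)), if_neg h]
    have hc2 : (if 1/m * l = 1 then (1:ℝ) else 0) = (if l = m then 1 else 0) := by
      rw [hml]
      by_cases h : l = m
      · rw [if_pos (he.mpr h), if_pos h]
      · rw [if_neg (fun hh => h (he.mp hh)), if_neg h]
    rw [hsymm]
    simp only [eaux]
    rw [hc1, hc2]
    ring
  -- (2) cross block (>, <) equals X
  have hcross' : (∑ l1 ∈ S.filter (fun l => 1 < l), ∑ l2 ∈ S.filter (· < 1),
      μ l1 * μ l2 * eaux (l1*l2)) = X := by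
    rw [Finset.sum_comm]
    rw [← hcross]
    apply Finset.sum_congr rfl
    intro a ha
    apply Finset.sum_congr rfl
    intro b hb
    rw [mul_comm b a]
    ring
  -- (3) X + X = D
  have hXswap : X = ∑ m ∈ S.filter (fun l => 1 < l), ∑ l ∈ S.filter (fun l => 1 < l),
      μ m * μ l * (l * (if m < l then 1 else 0) + l * (if m = l then 1 else 0)/2) := by
    rw [hX, Finset.sum_comm]
    apply Finset.sum_congr rfl
    intro a ha
    apply Finset.sum_congr rfl
    intro b hb
    ring
  have h2X : X + X = D := by
    nth_rewrite 2 [hXswap]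
    rw [hX, hD, ← Finset.sum_add_distrib]
    apply Finset.sum_congr rfl
    intro m hm
    rw [← Finset.sum_add_distrib]
    apply Finset.sum_congr rfl
    intro l hl
    rcases lt_trichotomy l m with h | h | h
    · rw [if_pos h, if_neg (ne_of_lt h), if_neg (lt_asymm h), if_neg (ne_of_gt h),
        max_eq_left (le_of_lt h)]
      ring
    · subst h
      rw [if_neg (lt_irrefl l), if_pos rfl, max_self]
      ring
    · rw [if_neg (lt_asymm h), if_neg (ne_of_gt h), if_pos h, if_neg (ne_of_lt h),
        max_eq_right (le_of_lt h)]
      ring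
  -- (4) A equals the tilted sum
  have hAE : A = ∑ l ∈ S.filter (fun l => 1 < l), μ l * l := by
    rw [hA, hbij μ]
    apply Finset.sum_congr rfl
    intro m hm
    obtain ⟨hmS, hm0, hm1⟩ := hmem_gt m hm
    rw [hsym m hmS]
    ring
  -- now compute the three outer parts
  have hPlt : (∑ l1 ∈ S.filter (· < 1), ∑ l2 ∈ S, μ l1 * μ l2 * eaux (l1*l2))
      = A*A + B*A + X := by
    rw [Finset.sum_congr rfl
      (fun l1 _ => hS3 (fun l2 => μ l1 * μ l2 * eaux (l1*l2)))]
    rw [Finset.sum_add_distrib, Finset.sum_add_distrib]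
    have e1 : (∑ l1 ∈ S.filter (· < 1), ∑ l2 ∈ S.filter (· < 1),
        μ l1 * μ l2 * eaux (l1*l2)) = A * A := by
      rw [hA, Finset.sum_mul_sum]
      apply Finset.sum_congr rfl; intro a ha
      apply Finset.sum_congr rfl; intro b hb
      obtain ⟨_, ha0, ha1⟩ := hmem_lt a ha
      obtain ⟨_, hb0, hb1⟩ := hmem_lt b hb
      have : a * b < 1 := by nlinarith
      rw [eaux_of_lt this]; ring
    have e2 : (∑ l1 ∈ S.filter (· < 1), ∑ l2 ∈ S.filter (· = 1),
        μ l1 * μ l2 * eaux (l1*l2)) = B * A := by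
      have : ∀ l1 ∈ S.filter (· < 1), (∑ l2 ∈ S.filter (· = 1),
          μ l1 * μ l2 * eaux (l1*l2)) = μ 1 * μ l1 := by
        intro l1 hl1
        obtain ⟨_, h0, h1⟩ := hmem_lt l1 hl1
        have : (∑ l2 ∈ S.filter (· = 1), μ l1 * μ l2 * eaux (l1*l2))
            = ∑ l2 ∈ S.filter (· = 1), μ l2 * (μ l1 * eaux (l1*l2)) := by
          apply Finset.sum_congr rfl; intro b hb; ring
        rw [this, hmid (fun l2 => μ l1 * eaux (l1*l2)), mul_one, eaux_of_lt h1]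
        ring
      rw [Finset.sum_congr rfl this, ← Finset.mul_sum]
    rw [e1, e2, hcross]
  have hPeq : (∑ l1 ∈ S.filter (· = 1), ∑ l2 ∈ S, μ l1 * μ l2 * eaux (l1*l2))
      = B*A + B*B/2 := by
    have : ∀ l1 ∈ S.filter (· = 1), (∑ l2 ∈ S, μ l1 * μ l2 * eaux (l1*l2))
        = μ l1 * (∑ l2 ∈ S, μ l2 * eaux (l1*l2)) := by
      intro l1 _
      rw [Finset.mul_sum]
      apply Finset.sum_congr rfl; intro b hb; ring
    rw [Finset.sum_congr rfl this, hmid (fun l1 => ∑ l2 ∈ S, μ l2 * eaux (l1*l2))]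
    have : (∑ l2 ∈ S, μ l2 * eaux (1*l2)) = A + B/2 := by
      rw [hS3 (fun l2 => μ l2 * eaux (1*l2))]
      have e1 : (∑ l2 ∈ S.filter (· < 1), μ l2 * eaux (1*l2)) = A := by
        rw [hA]
        apply Finset.sum_congr rfl; intro b hb
        obtain ⟨_, h0, h1⟩ := hmem_lt b hb
        rw [one_mul, eaux_of_lt h1, mul_one]
      have e2 : (∑ l2 ∈ S.filter (· = 1), μ l2 * eaux (1*l2)) = B/2 := by
        rw [hmid (fun l2 => eaux (1*l2)), one_mul, eaux_one, hB]
        ring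
      have e3 : (∑ l2 ∈ S.filter (fun l => 1 < l), μ l2 * eaux (1*l2)) = 0 := by
        apply Finset.sum_eq_zero
        intro b hb
        obtain ⟨_, h0, h1⟩ := hmem_gt b hb
        rw [one_mul, eaux_of_gt h1, mul_zero]
      rw [e1, e2, e3, add_zero]
    rw [this]
    ring
  have hPgt : (∑ l1 ∈ S.filter (fun l => 1 < l), ∑ l2 ∈ S, μ l1 * μ l2 * eaux (l1*l2))
      = X := by
    rw [Finset.sum_congr rfl
      (fun l1 _ => hS3 (fun l2 => μ l1 * μ l2 * eaux (l1*l2)))]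
    rw [Finset.sum_add_distrib, Finset.sum_add_distrib]
    have e2 : (∑ l1 ∈ S.filter (fun l => 1 < l), ∑ l2 ∈ S.filter (· = 1),
        μ l1 * μ l2 * eaux (l1*l2)) = 0 := by
      apply Finset.sum_eq_zero
      intro a ha
      obtain ⟨_, h0, h1⟩ := hmem_gt a ha
      have : (∑ l2 ∈ S.filter (· = 1), μ a * μ l2 * eaux (a*l2))
          = ∑ l2 ∈ S.filter (· = 1), μ l2 * (μ a * eaux (a*l2)) := by
        apply Finset.sum_congr rfl; intro b hb; ring
      rw [this, hmid (fun l2 => μ a * eaux (a*l2)), mul_one, eaux_of_gt h1]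
      ring
    have e3 : (∑ l1 ∈ S.filter (fun l => 1 < l), ∑ l2 ∈ S.filter (fun l => 1 < l),
        μ l1 * μ l2 * eaux (l1*l2)) = 0 := by
      apply Finset.sum_eq_zero
      intro a ha
      apply Finset.sum_eq_zero
      intro b hb
      obtain ⟨_, ha0, ha1⟩ := hmem_gt a ha
      obtain ⟨_, hb0, hb1⟩ := hmem_gt b hb
      have : 1 < a * b := by nlinarith
      rw [eaux_of_gt this, mul_zero]
    rw [e2, e3, hcross', add_zero, add_zero]
  -- final assembly
  rw [hS3 (fun l1 => ∑ l2 ∈ S, μ l1 * μ l2 * eaux (l1*l2)), hPlt, hPeq, hPgt,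
    ← hAE, ← h2X]
  ring
/-- Plus transform half-weighted probability:
`P[L⁺ ⪇ 1] = P[L ⪇ 1]² + Σ_{ℓ₁⪈1,ℓ₂⪈1} μ[L=ℓ₁]μ[L=ℓ₂]·max{ℓ₁,ℓ₂}`. -/

theorem plus_transform_lneq_identity {Y : Type*} [Fintype Y] (w L : Y → ℝ)
    (hw : ∀ y, 0 ≤ w y) (hwsum : ∑ y, w y = 1) (hL : ∀ y, 0 < L y)
    (hsym : ∀ l : ℝ, 0 < l → pm w L l = (1 / l) * pm w L (1 / l)) :
    PplusLneq w L = (Plneq w L) ^ 2 + hwSum w L (fun l1 l2 => max l1 l2) := by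
  classical
  set T := Finset.image L Finset.univ with hT
  set S := T ∪ T.image (fun l => 1/l) with hSdef
  have hTS : T ⊆ S := Finset.subset_union_left
  have hLT : ∀ y, L y ∈ T := fun y => Finset.mem_image_of_mem L (Finset.mem_univ y)
  have hpos : ∀ l ∈ S, 0 < l := by
    intro l hl
    rw [hSdef, Finset.mem_union] at hl
    rcases hl with hl | hl
    · obtain ⟨y, _, rfl⟩ := Finset.mem_image.mp hl
      exact hL y
    · obtain ⟨t, ht, rfl⟩ := Finset.mem_image.mp hl
      obtain ⟨y, _, rfl⟩ := Finset.mem_image.mp ht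
      have := hL y
      positivity
  have hinv : ∀ l ∈ S, 1/l ∈ S := by
    intro l hl
    rw [hSdef, Finset.mem_union] at hl ⊢
    rcases hl with hl | hl
    · exact Or.inr (Finset.mem_image_of_mem _ hl)
    · obtain ⟨t, ht, rfl⟩ := Finset.mem_image.mp hl
      rw [one_div_one_div]
      exact Or.inl ht
  have hpm0 : ∀ l, l ∉ T → pm w L l = 0 := by
    intro l h
    apply Finset.sum_eq_zero
    intro y _
    rw [if_neg]
    intro he
    exact h (he ▸ hLT y)
  have hzero : ∀ l, l ∉ S → pm w L l = 0 := fun l h => hpm0 l (fun ht => h (hTS ht))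
  have hsym' : ∀ l ∈ S, pm w L (1/l) = l * pm w L l := by
    intro l hl
    have h0 := hpos l hl
    have h1 := hsym (1/l) (by positivity)
    rw [one_div_one_div] at h1
    exact h1
  -- grouping lemma
  have hgroup : ∀ g : ℝ → ℝ, (∑ y, w y * g (L y)) = ∑ l ∈ S, pm w L l * g l := by
    intro g
    have h1 : ∀ l ∈ S, pm w L l * g l = ∑ y, if L y = l then w y * g (L y) else 0 := by
      intro l _
      simp only [pm]
      rw [Finset.sum_mul]
      apply Finset.sum_congr rfl
      intro y _
      split_ifs with h
      · rw [h]
      · rw [zero_mul]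
    rw [Finset.sum_congr rfl h1, Finset.sum_comm]
    apply Finset.sum_congr rfl
    intro y _
    rw [Finset.sum_ite_eq S (L y) (fun _ => w y * g (L y)), if_pos (hTS (hLT y))]
  -- single-variable quantities
  have hPlt : Plt w L = ∑ l ∈ S.filter (· < 1), pm w L l := by
    have h1 : Plt w L = ∑ y, w y * (if L y < 1 then 1 else 0) := by
      unfold Plt
      apply Finset.sum_congr rfl
      intro y _
      split_ifs <;> ring
    rw [h1, hgroup (fun l => if l < 1 then 1 else 0), Finset.sum_filter]
    apply Finset.sum_congr rfl
    intro l _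
    split_ifs <;> ring
  have hPeq : Peq w L = pm w L 1 := rfl
  -- double sums
  have hP1 :
      (∑ y1, ∑ y2, if L y1 * L y2 < 1 then w y1 * w y2 else 0)
      = ∑ l1 ∈ S, ∑ l2 ∈ S, pm w L l1 * pm w L l2 * (if l1 * l2 < 1 then 1 else 0) := by
    calc (∑ y1, ∑ y2, if L y1 * L y2 < 1 then w y1 * w y2 else 0)
        = ∑ y1, w y1 * ∑ l2 ∈ S, pm w L l2 * (if L y1 * l2 < 1 then 1 else 0) := by
          apply Finset.sum_congr rfl
          intro y1 _
          rw [← hgroup (fun b => if L y1 * b < 1 then 1 else 0), Finset.mul_sum]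
          apply Finset.sum_congr rfl
          intro y2 _
          split_ifs <;> ring
      _ = ∑ l1 ∈ S, pm w L l1 * ∑ l2 ∈ S, pm w L l2 * (if l1 * l2 < 1 then 1 else 0) :=
          hgroup (fun a => ∑ l2 ∈ S, pm w L l2 * (if a * l2 < 1 then 1 else 0))
      _ = ∑ l1 ∈ S, ∑ l2 ∈ S, pm w L l1 * pm w L l2 * (if l1 * l2 < 1 then 1 else 0) := by
          apply Finset.sum_congr rfl
          intro l1 _
          rw [Finset.mul_sum]
          apply Finset.sum_congr rfl
          intro l2 _
          ring
  have hP2 :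
      (∑ y1, ∑ y2, if L y1 * L y2 = 1 then w y1 * w y2 else 0)
      = ∑ l1 ∈ S, ∑ l2 ∈ S, pm w L l1 * pm w L l2 * (if l1 * l2 = 1 then 1 else 0) := by
    calc (∑ y1, ∑ y2, if L y1 * L y2 = 1 then w y1 * w y2 else 0)
        = ∑ y1, w y1 * ∑ l2 ∈ S, pm w L l2 * (if L y1 * l2 = 1 then 1 else 0) := by
          apply Finset.sum_congr rfl
          intro y1 _
          rw [← hgroup (fun b => if L y1 * b = 1 then 1 else 0), Finset.mul_sum]
          apply Finset.sum_congr rfl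
          intro y2 _
          split_ifs <;> ring
      _ = ∑ l1 ∈ S, pm w L l1 * ∑ l2 ∈ S, pm w L l2 * (if l1 * l2 = 1 then 1 else 0) :=
          hgroup (fun a => ∑ l2 ∈ S, pm w L l2 * (if a * l2 = 1 then 1 else 0))
      _ = ∑ l1 ∈ S, ∑ l2 ∈ S, pm w L l1 * pm w L l2 * (if l1 * l2 = 1 then 1 else 0) := by
          apply Finset.sum_congr rfl
          intro l1 _
          rw [Finset.mul_sum]
          apply Finset.sum_congr rfl
          intro l2 _
          ring
  have hLHS : PplusLneq w L
      = ∑ l1 ∈ S, ∑ l2 ∈ S, pm w L l1 * pm w L l2 * eaux (l1*l2) := by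
    unfold PplusLneq
    rw [hP1, hP2]
    rw [Finset.sum_div, ← Finset.sum_add_distrib]
    apply Finset.sum_congr rfl
    intro l1 _
    rw [Finset.sum_div, ← Finset.sum_add_distrib]
    apply Finset.sum_congr rfl
    intro l2 _
    simp only [eaux]
    ring
  -- hwSum extension
  have hhw : hwSum w L (fun l1 l2 => max l1 l2) =
      (∑ l1 ∈ S.filter (fun l => 1 < l), ∑ l2 ∈ S.filter (fun l => 1 < l),
         pm w L l1 * pm w L l2 * max l1 l2)
      + pm w L 1 * (∑ l ∈ S.filter (fun l => 1 < l), pm w L l * l)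
      + 1/4 * (pm w L 1)^2 := by
    simp only [hwSum]
    have hnotT : ∀ x ∈ S.filter (fun l => 1 < l), x ∉ T.filter (fun l => 1 < l) → pm w L x = 0 := by
      intro x hx hnx
      apply hpm0
      intro hxT
      exact hnx (Finset.mem_filter.mpr ⟨hxT, (Finset.mem_filter.mp hx).2⟩)
    have t1 : (∑ l1 ∈ T.filter (fun l => 1 < l), ∑ l2 ∈ T.filter (fun l => 1 < l),
        pm w L l1 * pm w L l2 * max l1 l2)
        = ∑ l1 ∈ S.filter (fun l => 1 < l), ∑ l2 ∈ S.filter (fun l => 1 < l),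
        pm w L l1 * pm w L l2 * max l1 l2 := by
      have inner : ∀ l1 : ℝ, (∑ l2 ∈ T.filter (fun l => 1 < l), pm w L l1 * pm w L l2 * max l1 l2)
          = ∑ l2 ∈ S.filter (fun l => 1 < l), pm w L l1 * pm w L l2 * max l1 l2 := by
        intro l1
        apply Finset.sum_subset (Finset.filter_subset_filter _ hTS)
        intro x hx hnx
        rw [hnotT x hx hnx]
        ring
      rw [Finset.sum_congr rfl (fun l1 _ => inner l1)]
      apply Finset.sum_subset (Finset.filter_subset_filter _ hTS)
      intro x hx hnx
      apply Finset.sum_eq_zero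
      intro l2 _
      rw [hnotT x hx hnx]
      ring
    have t2 : (∑ l ∈ T.filter (fun l => 1 < l), pm w L l * max l 1)
        = ∑ l ∈ S.filter (fun l => 1 < l), pm w L l * l := by
      have step : (∑ l ∈ T.filter (fun l => 1 < l), pm w L l * max l 1)
          = ∑ l ∈ T.filter (fun l => 1 < l), pm w L l * l := by
        apply Finset.sum_congr rfl
        intro l hl
        rw [max_eq_left (le_of_lt (Finset.mem_filter.mp hl).2)]
      rw [step]
      apply Finset.sum_subset (Finset.filter_subset_filter _ hTS)
      intro x hx hnx
      rw [hnotT x hx hnx]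
      ring
    rw [t1, t2, hPeq, max_self, mul_one]
  rw [hLHS, key_lemma S (pm w L) hpos hinv hzero hsym', hhw]
  unfold Plneq
  rw [hPlt, hPeq]
end

section
/- Let μ be a probability measure on a finite set Y and L : Y → ℝ positive with symmetry μ[L=ℓ] = (1/ℓ)μ[L=1/ℓ]. Let a = P[L ⪈ 1], b = P[L ⪇ 1] (so a + b = 1), and let S_min = Σ_{ℓ₁⪈1,ℓ₂⪈1} μ[L=ℓ₁]μ[L=ℓ₂]min{ℓ₁,ℓ₂}, S_max the analogous sum with max. Then the plus transform satisfies P[L⁺ ⪇ 1] = b² + S_max ≥ P[L⁺ ⪈ 1] = a² + S_min. In particular, assuming a ≤ b, the plus transform preserves the inequality P[L⁺ ⪈ 1] ≤ P[L⁺ ⪇ 1]. -/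
open Finset

section Aux
variable {Y : Type*} [Fintype Y]

lemma pm_zero (w L : Y → ℝ) {v : ℝ} (hv : v ∉ Finset.image L Finset.univ) :
    pm w L v = 0 :=
  Finset.sum_eq_zero fun y _ => if_neg fun h => hv (Finset.mem_image.2 ⟨y, Finset.mem_univ y, h⟩)

lemma pm_nn (w L : Y → ℝ) (hw : ∀ y, 0 ≤ w y) (v : ℝ) : 0 ≤ pm w L v := by
  refine Finset.sum_nonneg fun y _ => ?_
  split
  · exact hw y
  · exact le_rfl

lemma sum_group (w L : Y → ℝ) (g : ℝ → ℝ) :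
    ∑ v ∈ Finset.image L Finset.univ, g v * pm w L v = ∑ y, g (L y) * w y := by
  refine Finset.sum_image' _ fun y _ => ?_
  rw [pm, Finset.mul_sum, Finset.sum_filter]
  exact Finset.sum_congr rfl fun x _ => by
    rw [mul_ite, mul_zero]
    split <;> simp_all

end Aux

lemma tri_split (W : Finset ℝ) (F : ℝ → ℝ) :
    ∑ v ∈ W, F v = ∑ v ∈ W.filter (· < 1), F v + ∑ v ∈ W.filter (· = 1), F v
      + ∑ v ∈ W.filter (1 < ·), F v := by
  rw [Finset.sum_filter, Finset.sum_filter, Finset.sum_filter, ← Finset.sum_add_distrib,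
    ← Finset.sum_add_distrib]
  refine Finset.sum_congr rfl fun v _ => ?_
  rcases lt_trichotomy v 1 with h | h | h
  · simp [h, h.ne, h.not_gt]
  · simp [h]
  · simp [h, h.ne', h.not_gt]

lemma tri_split2 (W : Finset ℝ) (F : ℝ → ℝ → ℝ) :
    ∑ v1 ∈ W, ∑ v2 ∈ W, F v1 v2
    = ∑ v1 ∈ W.filter (· < 1), ∑ v2 ∈ W.filter (· < 1), F v1 v2
    + ∑ v1 ∈ W.filter (· < 1), ∑ v2 ∈ W.filter (· = 1), F v1 v2
    + ∑ v1 ∈ W.filter (· < 1), ∑ v2 ∈ W.filter (1 < ·), F v1 v2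
    + ∑ v1 ∈ W.filter (· = 1), ∑ v2 ∈ W.filter (· < 1), F v1 v2
    + ∑ v1 ∈ W.filter (· = 1), ∑ v2 ∈ W.filter (· = 1), F v1 v2
    + ∑ v1 ∈ W.filter (· = 1), ∑ v2 ∈ W.filter (1 < ·), F v1 v2
    + ∑ v1 ∈ W.filter (1 < ·), ∑ v2 ∈ W.filter (· < 1), F v1 v2
    + ∑ v1 ∈ W.filter (1 < ·), ∑ v2 ∈ W.filter (· = 1), F v1 v2
    + ∑ v1 ∈ W.filter (1 < ·), ∑ v2 ∈ W.filter (1 < ·), F v1 v2 := by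
  have h : ∀ s : Finset ℝ, ∑ v1 ∈ s, ∑ v2 ∈ W, F v1 v2
      = ∑ v1 ∈ s, ∑ v2 ∈ W.filter (· < 1), F v1 v2
      + ∑ v1 ∈ s, ∑ v2 ∈ W.filter (· = 1), F v1 v2
      + ∑ v1 ∈ s, ∑ v2 ∈ W.filter (1 < ·), F v1 v2 := by
    intro s
    rw [← Finset.sum_add_distrib, ← Finset.sum_add_distrib]
    exact Finset.sum_congr rfl fun v1 _ => tri_split W _
  rw [tri_split W (fun v1 => ∑ v2 ∈ W, F v1 v2), h, h, h]
  ring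

lemma filter_one_sum (W : Finset ℝ) (F : ℝ → ℝ) (h0 : (1:ℝ) ∉ W → F 1 = 0) :
    ∑ v ∈ W.filter (· = 1), F v = F 1 := by
  by_cases h : (1:ℝ) ∈ W
  · have he : W.filter (· = 1) = {1} := by
      ext v
      simp only [Finset.mem_filter, Finset.mem_singleton]
      exact ⟨fun hv => hv.2, fun hv => ⟨hv ▸ h, hv⟩⟩
    rw [he, Finset.sum_singleton]
  · have he : W.filter (· = 1) = ∅ := by
      ext v
      simp only [Finset.mem_filter, Finset.notMem_empty, iff_false, not_and]
      rintro hv rfl; exact h hv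
    rw [he, Finset.sum_empty, h0 h]

lemma inv_sum (W : Finset ℝ) (hpos : ∀ v ∈ W, 0 < v) (hinv : ∀ v ∈ W, 1 / v ∈ W)
    (F : ℝ → ℝ) :
    ∑ v ∈ W.filter (· < 1), F v = ∑ v ∈ W.filter (1 < ·), F (1 / v) := by
  refine Finset.sum_nbij' (fun v => 1 / v) (fun v => 1 / v) ?_ ?_ ?_ ?_ ?_
  · intro v hv
    rw [Finset.mem_filter] at hv ⊢
    refine ⟨hinv v hv.1, ?_⟩
    rw [lt_div_iff₀ (hpos v hv.1), one_mul]; exact hv.2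
  · intro v hv
    rw [Finset.mem_filter] at hv ⊢
    refine ⟨hinv v hv.1, ?_⟩
    rw [div_lt_one (lt_trans one_pos hv.2)]; exact hv.2
  · intro v _; rw [one_div_one_div]
  · intro v _; rw [one_div_one_div]
  · intro v _; rw [one_div_one_div]

lemma max_split (S : Finset ℝ) (F : ℝ → ℝ) :
    ∑ l ∈ S, ∑ m ∈ S, F l * F m * max l m
      = ∑ l ∈ S, ∑ m ∈ S, F l * F m *
          (2 * (if l < m then m else 0) + (if l = m then m else 0)) := by
  have key : ∀ a b : ℝ, max a b
      = (if a < b then b else 0) + (if b < a then a else 0) + (if a = b then b else 0) := by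
    intro a b
    rcases lt_trichotomy a b with h | h | h
    · simp [h, h.ne, h.not_gt, max_eq_right h.le]
    · simp [h]
    · simp [h, h.ne', h.not_gt, max_eq_left h.le]
  have swap : ∑ l ∈ S, ∑ m ∈ S, F l * F m * (if m < l then l else 0)
      = ∑ l ∈ S, ∑ m ∈ S, F l * F m * (if l < m then m else 0) := by
    rw [Finset.sum_comm]
    exact Finset.sum_congr rfl fun l _ => Finset.sum_congr rfl fun m _ => by ring_nf
  calc ∑ l ∈ S, ∑ m ∈ S, F l * F m * max l m
      = ∑ l ∈ S, (∑ m ∈ S, F l * F m * (if l < m then m else 0)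
        + ∑ m ∈ S, F l * F m * (if m < l then l else 0)
        + ∑ m ∈ S, F l * F m * (if l = m then m else 0)) := by
        refine Finset.sum_congr rfl fun l _ => ?_
        rw [← Finset.sum_add_distrib, ← Finset.sum_add_distrib]
        refine Finset.sum_congr rfl fun m _ => ?_
        rw [key]; ring
    _ = (∑ l ∈ S, ∑ m ∈ S, F l * F m * (if l < m then m else 0))
        + (∑ l ∈ S, ∑ m ∈ S, F l * F m * (if m < l then l else 0))
        + (∑ l ∈ S, ∑ m ∈ S, F l * F m * (if l = m then m else 0)) := by
        rw [← Finset.sum_add_distrib, ← Finset.sum_add_distrib]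
    _ = 2 * (∑ l ∈ S, ∑ m ∈ S, F l * F m * (if l < m then m else 0))
        + (∑ l ∈ S, ∑ m ∈ S, F l * F m * (if l = m then m else 0)) := by
        rw [swap]; ring
    _ = ∑ l ∈ S, ∑ m ∈ S, F l * F m *
          (2 * (if l < m then m else 0) + (if l = m then m else 0)) := by
        rw [Finset.mul_sum, ← Finset.sum_add_distrib]
        refine Finset.sum_congr rfl fun l _ => ?_
        rw [Finset.mul_sum, ← Finset.sum_add_distrib]
        exact Finset.sum_congr rfl fun m _ => by ring

lemma min_split (S : Finset ℝ) (F : ℝ → ℝ) :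
    ∑ l ∈ S, ∑ m ∈ S, F l * F m * min l m
      = ∑ l ∈ S, ∑ m ∈ S, F l * F m *
          (2 * (if m < l then m else 0) + (if l = m then m else 0)) := by
  have key : ∀ a b : ℝ, min a b
      = (if a < b then a else 0) + (if b < a then b else 0) + (if a = b then b else 0) := by
    intro a b
    rcases lt_trichotomy a b with h | h | h
    · simp [h, h.ne, h.not_gt, min_eq_left h.le]
    · simp [h]
    · simp [h, h.ne', h.not_gt, min_eq_right h.le]
  have swap : ∑ l ∈ S, ∑ m ∈ S, F l * F m * (if l < m then l else 0)
      = ∑ l ∈ S, ∑ m ∈ S, F l * F m * (if m < l then m else 0) := by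
    rw [Finset.sum_comm]
    exact Finset.sum_congr rfl fun l _ => Finset.sum_congr rfl fun m _ => by ring_nf
  calc ∑ l ∈ S, ∑ m ∈ S, F l * F m * min l m
      = ∑ l ∈ S, (∑ m ∈ S, F l * F m * (if l < m then l else 0)
        + ∑ m ∈ S, F l * F m * (if m < l then m else 0)
        + ∑ m ∈ S, F l * F m * (if l = m then m else 0)) := by
        refine Finset.sum_congr rfl fun l _ => ?_
        rw [← Finset.sum_add_distrib, ← Finset.sum_add_distrib]
        refine Finset.sum_congr rfl fun m _ => ?_
        rw [key]; ring
    _ = (∑ l ∈ S, ∑ m ∈ S, F l * F m * (if l < m then l else 0))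
        + (∑ l ∈ S, ∑ m ∈ S, F l * F m * (if m < l then m else 0))
        + (∑ l ∈ S, ∑ m ∈ S, F l * F m * (if l = m then m else 0)) := by
        rw [← Finset.sum_add_distrib, ← Finset.sum_add_distrib]
    _ = 2 * (∑ l ∈ S, ∑ m ∈ S, F l * F m * (if m < l then m else 0))
        + (∑ l ∈ S, ∑ m ∈ S, F l * F m * (if l = m then m else 0)) := by
        rw [swap]; ring
    _ = ∑ l ∈ S, ∑ m ∈ S, F l * F m *
          (2 * (if m < l then m else 0) + (if l = m then m else 0)) := by
        rw [Finset.mul_sum, ← Finset.sum_add_distrib]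
        refine Finset.sum_congr rfl fun l _ => ?_
        rw [Finset.mul_sum, ← Finset.sum_add_distrib]
        exact Finset.sum_congr rfl fun m _ => by ring

set_option maxHeartbeats 1600000 in
/-- Plus transform: `P[L⁺ ⪇ 1] = b² + S_max`, `P[L⁺ ⪈ 1] = a² + S_min`, and if
`a ≤ b` the inequality `P[L⁺ ⪈ 1] ≤ P[L⁺ ⪇ 1]` is preserved. -/
theorem plus_transform_preserves_inequality {Y : Type*} [Fintype Y] (w L : Y → ℝ)
    (hw : ∀ y, 0 ≤ w y) (hwsum : ∑ y, w y = 1) (hL : ∀ y, 0 < L y)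
    (hsym : ∀ l : ℝ, 0 < l → pm w L l = (1 / l) * pm w L (1 / l)) :
    PplusLneq w L = (Plneq w L) ^ 2 + hwSum w L (fun l1 l2 => max l1 l2) ∧
    PplusGneq w L = (Pgneq w L) ^ 2 + hwSum w L (fun l1 l2 => min l1 l2) ∧
    (Pgneq w L ≤ Plneq w L → PplusGneq w L ≤ PplusLneq w L) := by
  classical
  have boole : ∀ (c : Prop) [Decidable c] (x : ℝ),
      (if c then (1:ℝ) else 0) * x = if c then x else 0 := by
    intro c _ x; split <;> simp
  set V := Finset.image L Finset.univ with hVdef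
  set W := V ∪ V.image (fun v => 1 / v) with hWdef
  have hVW : V ⊆ W := Finset.subset_union_left
  have hVpos : ∀ v ∈ V, 0 < v := by
    intro v hv
    obtain ⟨y, -, rfl⟩ := Finset.mem_image.1 hv
    exact hL y
  have hWpos : ∀ v ∈ W, 0 < v := by
    intro v hv
    rcases Finset.mem_union.1 hv with h | h
    · exact hVpos v h
    · obtain ⟨u, hu, rfl⟩ := Finset.mem_image.1 h
      exact div_pos one_pos (hVpos u hu)
  have hinvW : ∀ v ∈ W, 1 / v ∈ W := by
    intro v hv
    rcases Finset.mem_union.1 hv with h | h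
    · exact Finset.mem_union_right _ (Finset.mem_image_of_mem _ h)
    · obtain ⟨u, hu, rfl⟩ := Finset.mem_image.1 h
      rw [one_div_one_div]
      exact hVW hu
  have hP0 : ∀ v : ℝ, v ∉ V → pm w L v = 0 := fun v hv => pm_zero w L hv
  have hPnn : ∀ v : ℝ, 0 ≤ pm w L v := pm_nn w L hw
  have hPinv : ∀ v : ℝ, 0 < v → pm w L (1 / v) = v * pm w L v := by
    intro v hv
    have h := hsym (1 / v) (by positivity)
    rwa [one_div_one_div] at h
  have groupW : ∀ g : ℝ → ℝ, (∑ y, g (L y) * w y) = ∑ v ∈ W, g v * pm w L v := by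
    intro g
    rw [← sum_group w L g]
    exact Finset.sum_subset hVW fun v _ hv => by rw [hP0 v hv, mul_zero]
  have groupW2 : ∀ g : ℝ → ℝ → ℝ,
      (∑ y1, ∑ y2, g (L y1) (L y2) * (w y1 * w y2))
      = ∑ v1 ∈ W, ∑ v2 ∈ W, g v1 v2 * (pm w L v1 * pm w L v2) := by
    intro g
    calc (∑ y1, ∑ y2, g (L y1) (L y2) * (w y1 * w y2))
        = ∑ y1, (fun v => ∑ v2 ∈ W, g v v2 * pm w L v2) (L y1) * w y1 := by
          refine Finset.sum_congr rfl fun y1 _ => ?_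
          dsimp only
          rw [← groupW (g (L y1)), Finset.sum_mul]
          exact Finset.sum_congr rfl fun y2 _ => by ring
      _ = ∑ v1 ∈ W, (∑ v2 ∈ W, g v1 v2 * pm w L v2) * pm w L v1 :=
          groupW (fun v => ∑ v2 ∈ W, g v v2 * pm w L v2)
      _ = ∑ v1 ∈ W, ∑ v2 ∈ W, g v1 v2 * (pm w L v1 * pm w L v2) := by
          refine Finset.sum_congr rfl fun v1 _ => ?_
          rw [Finset.sum_mul]
          exact Finset.sum_congr rfl fun v2 _ => by ring
  set Wn := W.filter (· < 1) with hWn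
  set Wo := W.filter (· = 1) with hWo
  set Wp := W.filter (1 < ·) with hWp
  set A := ∑ v ∈ Wn, pm w L v with hA
  set B := ∑ v ∈ Wp, pm w L v with hB
  set e := pm w L 1 with hE
  have hPeq : Peq w L = e := rfl
  have he0 : (1:ℝ) ∉ W → e = 0 := fun h => hP0 1 fun hv => h (hVW hv)
  have hPlt : Plt w L = A := by
    unfold Plt
    rw [hA, hWn, Finset.sum_filter]
    calc ∑ y, (if L y < 1 then w y else 0)
        = ∑ y, (if L y < 1 then (1:ℝ) else 0) * w y :=
          Finset.sum_congr rfl fun y _ => (boole _ _).symm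
      _ = ∑ v ∈ W, (if v < 1 then (1:ℝ) else 0) * pm w L v :=
          groupW (fun v => if v < 1 then (1:ℝ) else 0)
      _ = ∑ v ∈ W, (if v < 1 then pm w L v else 0) :=
          Finset.sum_congr rfl fun v _ => boole _ _
  have hPgt : Pgt w L = B := by
    unfold Pgt
    rw [hB, hWp, Finset.sum_filter]
    calc ∑ y, (if 1 < L y then w y else 0)
        = ∑ y, (if 1 < L y then (1:ℝ) else 0) * w y :=
          Finset.sum_congr rfl fun y _ => (boole _ _).symm
      _ = ∑ v ∈ W, (if 1 < v then (1:ℝ) else 0) * pm w L v :=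
          groupW (fun v => if 1 < v then (1:ℝ) else 0)
      _ = ∑ v ∈ W, (if 1 < v then pm w L v else 0) :=
          Finset.sum_congr rfl fun v _ => boole _ _
  have hA' : A = ∑ v ∈ Wp, pm w L v * v := by
    rw [hA, hWn, hWp, inv_sum W hWpos hinvW (pm w L)]
    refine Finset.sum_congr rfl fun v hv => ?_
    have hv1 : 1 < v := (Finset.mem_filter.1 hv).2
    rw [hPinv v (lt_trans one_pos hv1)]
    ring
  -- extension of hwSum sums from V-filters to Wp
  have hsub : V.filter (fun l => 1 < l) ⊆ Wp := by
    rw [hWp]; exact Finset.filter_subset_filter _ hVW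
  have hz : ∀ l ∈ Wp, l ∉ V.filter (fun l => 1 < l) → pm w L l = 0 := by
    intro l hl hnl
    refine hP0 l fun hV => hnl (Finset.mem_filter.2 ⟨hV, ?_⟩)
    exact (Finset.mem_filter.1 hl).2
  have ext2 : ∀ f : ℝ → ℝ → ℝ,
      (∑ l1 ∈ V.filter (fun l => 1 < l), ∑ l2 ∈ V.filter (fun l => 1 < l),
        pm w L l1 * pm w L l2 * f l1 l2)
      = ∑ l1 ∈ Wp, ∑ l2 ∈ Wp, pm w L l1 * pm w L l2 * f l1 l2 := by
    intro f
    calc (∑ l1 ∈ V.filter (fun l => 1 < l), ∑ l2 ∈ V.filter (fun l => 1 < l),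
          pm w L l1 * pm w L l2 * f l1 l2)
        = ∑ l1 ∈ V.filter (fun l => 1 < l), ∑ l2 ∈ Wp, pm w L l1 * pm w L l2 * f l1 l2 :=
          Finset.sum_congr rfl fun l1 _ =>
            Finset.sum_subset hsub fun l2 h2 hn2 => by
              rw [hz l2 h2 hn2, mul_zero, zero_mul]
      _ = ∑ l1 ∈ Wp, ∑ l2 ∈ Wp, pm w L l1 * pm w L l2 * f l1 l2 :=
          Finset.sum_subset hsub fun l1 h1 hn1 =>
            Finset.sum_eq_zero fun l2 _ => by rw [hz l1 h1 hn1, zero_mul, zero_mul]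
  have ext1 : ∀ f : ℝ → ℝ → ℝ,
      (∑ l ∈ V.filter (fun l => 1 < l), pm w L l * f l 1)
      = ∑ l ∈ Wp, pm w L l * f l 1 :=
    fun f => Finset.sum_subset hsub fun l hl hnl => by rw [hz l hl hnl, zero_mul]
  have hwmax : hwSum w L (fun l1 l2 => max l1 l2)
      = (∑ l ∈ Wp, ∑ m ∈ Wp, pm w L l * pm w L m * max l m) + e * A + (1/4) * e^2 := by
    unfold hwSum
    rw [← hVdef, hPeq, ext2 (fun l1 l2 => max l1 l2), ext1 (fun l1 l2 => max l1 l2)]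
    beta_reduce
    have h1 : (∑ l ∈ Wp, pm w L l * max l 1) = A := by
      rw [hA']
      refine Finset.sum_congr rfl fun l hl => ?_
      rw [hWp] at hl
      rw [max_eq_left (le_of_lt (Finset.mem_filter.1 hl).2)]
    rw [h1]
    simp only [max_self]
    ring
  have hwmin : hwSum w L (fun l1 l2 => min l1 l2)
      = (∑ l ∈ Wp, ∑ m ∈ Wp, pm w L l * pm w L m * min l m) + e * B + (1/4) * e^2 := by
    unfold hwSum
    rw [← hVdef, hPeq, ext2 (fun l1 l2 => min l1 l2), ext1 (fun l1 l2 => min l1 l2)]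
    beta_reduce
    have h1 : (∑ l ∈ Wp, pm w L l * min l 1) = B := by
      rw [hB]
      refine Finset.sum_congr rfl fun l hl => ?_
      rw [hWp] at hl
      rw [min_eq_right (le_of_lt (Finset.mem_filter.1 hl).2), mul_one]
    rw [h1]
    simp only [min_self]
    ring
  -- membership helpers
  have memn : ∀ v ∈ Wn, v ∈ W ∧ v < 1 := fun v hv => Finset.mem_filter.1 (hWn ▸ hv)
  have memo : ∀ v ∈ Wo, v ∈ W ∧ v = 1 := fun v hv => Finset.mem_filter.1 (hWo ▸ hv)
  have memp : ∀ v ∈ Wp, v ∈ W ∧ 1 < v := fun v hv => Finset.mem_filter.1 (hWp ▸ hv)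
  ---------------------------------------------------------------- Goal 1
  have key1 : PplusLneq w L = (Plneq w L) ^ 2 + hwSum w L (fun l1 l2 => max l1 l2) := by
    set c1 : ℝ → ℝ → ℝ := fun v1 v2 =>
      ((if v1 * v2 < 1 then (1:ℝ) else 0) + (if v1 * v2 = 1 then (1:ℝ) else 0)/2)
        * (pm w L v1 * pm w L v2) with hc1
    have hL1 : PplusLneq w L = ∑ v1 ∈ W, ∑ v2 ∈ W, c1 v1 v2 := by
      unfold PplusLneq
      rw [hc1, ← groupW2 (fun a b =>
        (if a * b < 1 then (1:ℝ) else 0) + (if a * b = 1 then (1:ℝ) else 0)/2)]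
      have e1 : ∀ y1 y2 : Y,
          ((if L y1 * L y2 < 1 then (1:ℝ) else 0)
            + (if L y1 * L y2 = 1 then (1:ℝ) else 0)/2) * (w y1 * w y2)
          = (if L y1 * L y2 < 1 then w y1 * w y2 else 0)
            + (if L y1 * L y2 = 1 then w y1 * w y2 else 0)/2 := by
        intro y1 y2; split_ifs <;> ring
      simp only [e1, Finset.sum_add_distrib, ← Finset.sum_div]
    set X : ℝ := ∑ m ∈ Wp, ∑ v ∈ Wp,
      ((if v < m then (1:ℝ) else 0) + (if v = m then (1:ℝ) else 0)/2)
        * (m * pm w L m * pm w L v) with hX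
    set X' : ℝ := ∑ l ∈ Wp, ∑ m ∈ Wp,
      ((if l < m then (1:ℝ) else 0) + (if l = m then (1:ℝ) else 0)/2)
        * (pm w L l * (m * pm w L m)) with hX'
    have b1 : ∑ v1 ∈ Wn, ∑ v2 ∈ Wn, c1 v1 v2 = A * A := by
      rw [hA, Finset.sum_mul_sum]
      refine Finset.sum_congr rfl fun v1 hv1 => Finset.sum_congr rfl fun v2 hv2 => ?_
      obtain ⟨hw1, hl1⟩ := memn v1 hv1
      obtain ⟨hw2, hl2⟩ := memn v2 hv2
      have p1 : 0 < v1 := hWpos v1 hw1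
      have p2 : 0 < v2 := hWpos v2 hw2
      have hlt : v1 * v2 < 1 := by nlinarith
      rw [hc1]
      simp only [if_pos hlt, if_neg (ne_of_lt hlt)]
      ring
    have b2 : ∑ v1 ∈ Wn, ∑ v2 ∈ Wo, c1 v1 v2 = A * e := by
      rw [hA, Finset.sum_mul]
      refine Finset.sum_congr rfl fun v1 hv1 => ?_
      obtain ⟨hw1, hl1⟩ := memn v1 hv1
      rw [hWo]
      rw [filter_one_sum W (fun v2 => c1 v1 v2) (fun h => by
        rw [hc1]; dsimp only; rw [hP0 1 (fun hv => h (hVW hv)), mul_zero, mul_zero])]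
      rw [hc1]
      dsimp only
      rw [mul_one, if_pos hl1, if_neg (ne_of_lt hl1)]
      rw [hE]
      ring
    have b3 : ∑ v1 ∈ Wn, ∑ v2 ∈ Wp, c1 v1 v2 = X := by
      rw [hWn, inv_sum W hWpos hinvW (fun v1 => ∑ v2 ∈ Wp, c1 v1 v2), hX]
      refine Finset.sum_congr rfl fun m hm => ?_
      refine Finset.sum_congr rfl fun v hv => ?_
      have hm1 : 1 < m := (memp m hm).2
      have hm0 : 0 < m := lt_trans one_pos hm1
      have clt : (1 / m * v < 1) ↔ (v < m) := by
        rw [one_div_mul_eq_div, div_lt_one hm0]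
      have ceq : (1 / m * v = 1) ↔ (v = m) := by
        rw [one_div_mul_eq_div, div_eq_one_iff_eq hm0.ne']
      rw [hc1]
      dsimp only
      simp only [clt, ceq, hPinv m hm0]
    have b4 : ∑ v1 ∈ Wo, ∑ v2 ∈ Wn, c1 v1 v2 = e * A := by
      rw [hWo]
      rw [filter_one_sum W (fun v1 => ∑ v2 ∈ Wn, c1 v1 v2) (fun h =>
        Finset.sum_eq_zero fun v2 _ => by
          rw [hc1]; dsimp only; rw [hP0 1 (fun hv => h (hVW hv)), zero_mul, mul_zero])]
      rw [hA, Finset.mul_sum]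
      refine Finset.sum_congr rfl fun v2 hv2 => ?_
      obtain ⟨hw2, hl2⟩ := memn v2 hv2
      rw [hc1]
      dsimp only
      rw [one_mul, if_pos hl2, if_neg (ne_of_lt hl2), hE]
      ring
    have b5 : ∑ v1 ∈ Wo, ∑ v2 ∈ Wo, c1 v1 v2 = e * e / 2 := by
      rw [hWo]
      rw [filter_one_sum W (fun v1 => ∑ v2 ∈ W.filter (· = 1), c1 v1 v2) (fun h =>
        Finset.sum_eq_zero fun v2 _ => by
          rw [hc1]; dsimp only; rw [hP0 1 (fun hv => h (hVW hv)), zero_mul, mul_zero])]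
      rw [filter_one_sum W (fun v2 => c1 1 v2) (fun h => by
        rw [hc1]; dsimp only; rw [hP0 1 (fun hv => h (hVW hv)), mul_zero, mul_zero])]
      rw [hc1]
      dsimp only
      rw [mul_one, if_neg (lt_irrefl 1), if_pos rfl, hE]
      ring
    have b6 : ∑ v1 ∈ Wo, ∑ v2 ∈ Wp, c1 v1 v2 = 0 := by
      refine Finset.sum_eq_zero fun v1 hv1 => Finset.sum_eq_zero fun v2 hv2 => ?_
      obtain ⟨hw1, hl1⟩ := memo v1 hv1
      obtain ⟨hw2, hl2⟩ := memp v2 hv2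
      rw [hc1]
      dsimp only
      rw [hl1, one_mul, if_neg (asymm hl2), if_neg (ne_of_gt hl2)]
      ring
    have b7 : ∑ v1 ∈ Wp, ∑ v2 ∈ Wn, c1 v1 v2 = X' := by
      rw [hX']
      refine Finset.sum_congr rfl fun v1 hv1 => ?_
      have hv1' := memp v1 hv1
      rw [hWn, inv_sum W hWpos hinvW (fun v2 => c1 v1 v2)]
      refine Finset.sum_congr rfl fun m hm => ?_
      have hm1 : 1 < m := (memp m hm).2
      have hm0 : 0 < m := lt_trans one_pos hm1
      have clt : (v1 * (1 / m) < 1) ↔ (v1 < m) := by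
        rw [mul_one_div, div_lt_one hm0]
      have ceq : (v1 * (1 / m) = 1) ↔ (v1 = m) := by
        rw [mul_one_div, div_eq_one_iff_eq hm0.ne']
      rw [hc1]
      dsimp only
      simp only [clt, ceq, hPinv m hm0]
    have b8 : ∑ v1 ∈ Wp, ∑ v2 ∈ Wo, c1 v1 v2 = 0 := by
      refine Finset.sum_eq_zero fun v1 hv1 => Finset.sum_eq_zero fun v2 hv2 => ?_
      obtain ⟨hw1, hl1⟩ := memp v1 hv1
      obtain ⟨hw2, hl2⟩ := memo v2 hv2
      rw [hc1]
      dsimp only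
      rw [hl2, mul_one, if_neg (asymm hl1), if_neg (ne_of_gt hl1)]
      ring
    have b9 : ∑ v1 ∈ Wp, ∑ v2 ∈ Wp, c1 v1 v2 = 0 := by
      refine Finset.sum_eq_zero fun v1 hv1 => Finset.sum_eq_zero fun v2 hv2 => ?_
      obtain ⟨hw1, hl1⟩ := memp v1 hv1
      obtain ⟨hw2, hl2⟩ := memp v2 hv2
      have hgt : 1 < v1 * v2 := by nlinarith
      rw [hc1]
      dsimp only
      rw [if_neg (asymm hgt), if_neg (ne_of_gt hgt)]
      ring
    have hXX' : X = X' := by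
      rw [hX, hX', Finset.sum_comm]
      exact Finset.sum_congr rfl fun l _ => Finset.sum_congr rfl fun m _ => by ring
    have hXXM : X + X' = ∑ l ∈ Wp, ∑ m ∈ Wp, pm w L l * pm w L m * max l m := by
      rw [hXX', ← two_mul, max_split Wp (pm w L), Finset.mul_sum]
      refine Finset.sum_congr rfl fun l _ => ?_
      rw [Finset.mul_sum]
      exact Finset.sum_congr rfl fun m _ => by split_ifs <;> ring
    rw [hL1, tri_split2 W c1, ← hWn, ← hWo, ← hWp, b1, b2, b3, b4, b5, b6, b7, b8, b9]
    rw [hwmax]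
    unfold Plneq
    rw [hPlt, hPeq]
    linear_combination hXXM
  ---------------------------------------------------------------- Goal 2
  have key2 : PplusGneq w L = (Pgneq w L) ^ 2 + hwSum w L (fun l1 l2 => min l1 l2) := by
    set c2 : ℝ → ℝ → ℝ := fun v1 v2 =>
      ((if 1 < v1 * v2 then (1:ℝ) else 0) + (if v1 * v2 = 1 then (1:ℝ) else 0)/2)
        * (pm w L v1 * pm w L v2) with hc2
    have hL2 : PplusGneq w L = ∑ v1 ∈ W, ∑ v2 ∈ W, c2 v1 v2 := by
      unfold PplusGneq
      rw [hc2, ← groupW2 (fun a b =>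
        (if 1 < a * b then (1:ℝ) else 0) + (if a * b = 1 then (1:ℝ) else 0)/2)]
      have e1 : ∀ y1 y2 : Y,
          ((if 1 < L y1 * L y2 then (1:ℝ) else 0)
            + (if L y1 * L y2 = 1 then (1:ℝ) else 0)/2) * (w y1 * w y2)
          = (if 1 < L y1 * L y2 then w y1 * w y2 else 0)
            + (if L y1 * L y2 = 1 then w y1 * w y2 else 0)/2 := by
        intro y1 y2; split_ifs <;> ring
      simp only [e1, Finset.sum_add_distrib, ← Finset.sum_div]
    set Z : ℝ := ∑ m ∈ Wp, ∑ v ∈ Wp,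
      ((if m < v then (1:ℝ) else 0) + (if v = m then (1:ℝ) else 0)/2)
        * (m * pm w L m * pm w L v) with hZ
    set Z' : ℝ := ∑ l ∈ Wp, ∑ m ∈ Wp,
      ((if m < l then (1:ℝ) else 0) + (if l = m then (1:ℝ) else 0)/2)
        * (pm w L l * (m * pm w L m)) with hZ'
    have b1 : ∑ v1 ∈ Wn, ∑ v2 ∈ Wn, c2 v1 v2 = 0 := by
      refine Finset.sum_eq_zero fun v1 hv1 => Finset.sum_eq_zero fun v2 hv2 => ?_
      obtain ⟨hw1, hl1⟩ := memn v1 hv1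
      obtain ⟨hw2, hl2⟩ := memn v2 hv2
      have p1 : 0 < v1 := hWpos v1 hw1
      have p2 : 0 < v2 := hWpos v2 hw2
      have hlt : v1 * v2 < 1 := by nlinarith
      rw [hc2]
      dsimp only
      rw [if_neg (asymm hlt), if_neg (ne_of_lt hlt)]
      ring
    have b2 : ∑ v1 ∈ Wn, ∑ v2 ∈ Wo, c2 v1 v2 = 0 := by
      refine Finset.sum_eq_zero fun v1 hv1 => Finset.sum_eq_zero fun v2 hv2 => ?_
      obtain ⟨hw1, hl1⟩ := memn v1 hv1
      obtain ⟨hw2, hl2⟩ := memo v2 hv2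
      rw [hc2]
      dsimp only
      rw [hl2, mul_one, if_neg (asymm hl1), if_neg (ne_of_lt hl1)]
      ring
    have b3 : ∑ v1 ∈ Wn, ∑ v2 ∈ Wp, c2 v1 v2 = Z := by
      rw [hWn, inv_sum W hWpos hinvW (fun v1 => ∑ v2 ∈ Wp, c2 v1 v2), hZ]
      refine Finset.sum_congr rfl fun m hm => ?_
      refine Finset.sum_congr rfl fun v hv => ?_
      have hm1 : 1 < m := (memp m hm).2
      have hm0 : 0 < m := lt_trans one_pos hm1
      have clt : (1 < 1 / m * v) ↔ (m < v) := by
        rw [one_div_mul_eq_div, one_lt_div hm0]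
      have ceq : (1 / m * v = 1) ↔ (v = m) := by
        rw [one_div_mul_eq_div, div_eq_one_iff_eq hm0.ne']
      rw [hc2]
      dsimp only
      simp only [clt, ceq, hPinv m hm0]
    have b4 : ∑ v1 ∈ Wo, ∑ v2 ∈ Wn, c2 v1 v2 = 0 := by
      refine Finset.sum_eq_zero fun v1 hv1 => Finset.sum_eq_zero fun v2 hv2 => ?_
      obtain ⟨hw1, hl1⟩ := memo v1 hv1
      obtain ⟨hw2, hl2⟩ := memn v2 hv2
      rw [hc2]
      dsimp only
      rw [hl1, one_mul, if_neg (asymm hl2), if_neg (ne_of_lt hl2)]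
      ring
    have b5 : ∑ v1 ∈ Wo, ∑ v2 ∈ Wo, c2 v1 v2 = e * e / 2 := by
      rw [hWo]
      rw [filter_one_sum W (fun v1 => ∑ v2 ∈ W.filter (· = 1), c2 v1 v2) (fun h =>
        Finset.sum_eq_zero fun v2 _ => by
          rw [hc2]; dsimp only; rw [hP0 1 (fun hv => h (hVW hv)), zero_mul, mul_zero])]
      rw [filter_one_sum W (fun v2 => c2 1 v2) (fun h => by
        rw [hc2]; dsimp only; rw [hP0 1 (fun hv => h (hVW hv)), mul_zero, mul_zero])]
      rw [hc2]
      dsimp only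
      rw [mul_one, if_neg (lt_irrefl 1), if_pos rfl, hE]
      ring
    have b6 : ∑ v1 ∈ Wo, ∑ v2 ∈ Wp, c2 v1 v2 = e * B := by
      rw [hWo]
      rw [filter_one_sum W (fun v1 => ∑ v2 ∈ Wp, c2 v1 v2) (fun h =>
        Finset.sum_eq_zero fun v2 _ => by
          rw [hc2]; dsimp only; rw [hP0 1 (fun hv => h (hVW hv)), zero_mul, mul_zero])]
      rw [hB, Finset.mul_sum]
      refine Finset.sum_congr rfl fun v2 hv2 => ?_
      obtain ⟨hw2, hl2⟩ := memp v2 hv2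
      rw [hc2]
      dsimp only
      rw [one_mul, if_pos hl2, if_neg (ne_of_gt hl2), hE]
      ring
    have b7 : ∑ v1 ∈ Wp, ∑ v2 ∈ Wn, c2 v1 v2 = Z' := by
      rw [hZ']
      refine Finset.sum_congr rfl fun v1 hv1 => ?_
      have hv1' := memp v1 hv1
      rw [hWn, inv_sum W hWpos hinvW (fun v2 => c2 v1 v2)]
      refine Finset.sum_congr rfl fun m hm => ?_
      have hm1 : 1 < m := (memp m hm).2
      have hm0 : 0 < m := lt_trans one_pos hm1
      have clt : (1 < v1 * (1 / m)) ↔ (m < v1) := by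
        rw [mul_one_div, one_lt_div hm0]
      have ceq : (v1 * (1 / m) = 1) ↔ (v1 = m) := by
        rw [mul_one_div, div_eq_one_iff_eq hm0.ne']
      rw [hc2]
      dsimp only
      simp only [clt, ceq, hPinv m hm0]
    have b8 : ∑ v1 ∈ Wp, ∑ v2 ∈ Wo, c2 v1 v2 = B * e := by
      calc ∑ v1 ∈ Wp, ∑ v2 ∈ Wo, c2 v1 v2
          = ∑ v1 ∈ Wp, pm w L v1 * e := by
            refine Finset.sum_congr rfl fun v1 hv1 => ?_
            obtain ⟨hw1, hl1⟩ := memp v1 hv1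
            rw [hWo]
            rw [filter_one_sum W (fun v2 => c2 v1 v2) (fun h => by
              rw [hc2]; dsimp only; rw [hP0 1 (fun hv => h (hVW hv)), mul_zero, mul_zero])]
            rw [hc2]
            dsimp only
            rw [mul_one, if_pos hl1, if_neg (ne_of_gt hl1), hE]
            ring
        _ = B * e := by rw [hB, Finset.sum_mul]
    have b9 : ∑ v1 ∈ Wp, ∑ v2 ∈ Wp, c2 v1 v2 = B * B := by
      rw [hB, Finset.sum_mul_sum]
      refine Finset.sum_congr rfl fun v1 hv1 => Finset.sum_congr rfl fun v2 hv2 => ?_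
      obtain ⟨hw1, hl1⟩ := memp v1 hv1
      obtain ⟨hw2, hl2⟩ := memp v2 hv2
      have hgt : 1 < v1 * v2 := by nlinarith
      rw [hc2]
      simp only [if_pos hgt, if_neg (ne_of_gt hgt)]
      ring
    have hZZ' : Z = Z' := by
      rw [hZ, hZ', Finset.sum_comm]
      exact Finset.sum_congr rfl fun l _ => Finset.sum_congr rfl fun m _ => by ring
    have hZZN : Z + Z' = ∑ l ∈ Wp, ∑ m ∈ Wp, pm w L l * pm w L m * min l m := by
      rw [hZZ', ← two_mul, min_split Wp (pm w L), Finset.mul_sum]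
      refine Finset.sum_congr rfl fun l _ => ?_
      rw [Finset.mul_sum]
      exact Finset.sum_congr rfl fun m _ => by split_ifs <;> ring
    rw [hL2, tri_split2 W c2, ← hWn, ← hWo, ← hWp, b1, b2, b3, b4, b5, b6, b7, b8, b9]
    rw [hwmin]
    unfold Pgneq
    rw [hPgt, hPeq]
    linear_combination hZZN
  ---------------------------------------------------------------- Goal 3
  refine ⟨key1, key2, fun hab => ?_⟩
  rw [key1, key2]
  have hg0 : 0 ≤ Pgneq w L := by
    unfold Pgneq Pgt
    have h1 : 0 ≤ ∑ y, if 1 < L y then w y else 0 := by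
      refine Finset.sum_nonneg fun y _ => ?_
      split
      · exact hw y
      · exact le_rfl
    have h2 : 0 ≤ Peq w L := hPnn 1
    linarith
  have hmono : hwSum w L (fun l1 l2 => min l1 l2) ≤ hwSum w L (fun l1 l2 => max l1 l2) := by
    unfold hwSum
    have hd : (∑ l1 ∈ (Finset.image L Finset.univ).filter (fun l => 1 < l),
          ∑ l2 ∈ (Finset.image L Finset.univ).filter (fun l => 1 < l),
            pm w L l1 * pm w L l2 * min l1 l2)
        ≤ ∑ l1 ∈ (Finset.image L Finset.univ).filter (fun l => 1 < l),
          ∑ l2 ∈ (Finset.image L Finset.univ).filter (fun l => 1 < l),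
            pm w L l1 * pm w L l2 * max l1 l2 :=
      Finset.sum_le_sum fun l1 _ => Finset.sum_le_sum fun l2 _ =>
        mul_le_mul_of_nonneg_left (min_le_max) (mul_nonneg (hPnn l1) (hPnn l2))
    have hs : Peq w L * (∑ l ∈ (Finset.image L Finset.univ).filter (fun l => 1 < l),
          pm w L l * min l 1)
        ≤ Peq w L * ∑ l ∈ (Finset.image L Finset.univ).filter (fun l => 1 < l),
          pm w L l * max l 1 :=
      mul_le_mul_of_nonneg_left
        (Finset.sum_le_sum fun l _ => mul_le_mul_of_nonneg_left min_le_max (hPnn l))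
        (hPnn 1)
    have hq : (1/4) * Peq w L ^ 2 * min 1 1 ≤ (1/4) * Peq w L ^ 2 * max 1 1 := by
      simp only [min_self, max_self]
      exact le_rfl
    exact add_le_add (add_le_add hd hs) hq
  exact add_le_add (pow_le_pow_left₀ hg0 hab 2) hmono
end

section
/- Let (Q_n) be a stochastic process adapted to a filtration (F_n), taking values in [0,1], such that Q_{n+1} = Q_n² with probability 1/2 and Q_{n+1} ∈ [Q_n, 2Q_n − Q_n²] with probability 1/2, conditionally on F_n. Then (Q_n) converges almost surely, and the limit Q_∞ takes values in {0, 1} almost surely. -/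
open MeasureTheory ProbabilityTheory Filter
open scoped ENNReal

/-- The polarization process `Q_n ∈ [0,1]` which, given `F_n`, squares with probability
`1/2` and otherwise moves to a value in `[Q_n, 2Q_n − Q_n²]`, converges a.s. to `{0,1}`. -/
theorem Q_process_polarizes
    {Ω : Type*} {m : MeasurableSpace Ω} (P : Measure Ω) [IsProbabilityMeasure P]
    (F : Filtration ℕ m) (Q : ℕ → Ω → ℝ)
    (hadapted : Adapted F Q)
    (hbound : ∀ n ω, Q n ω ∈ Set.Icc (0 : ℝ) 1)
    (B : ℕ → Ω → Bool) (hBmeas : ∀ n, Measurable (B n))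
    (hBhalf : ∀ n, P {ω | B n ω = true} = 1 / 2)
    (hBindep : ∀ n, Indep (MeasurableSpace.comap (B n) ⊤) (F n) P)
    (hminus : ∀ n ω, B n ω = false → Q (n + 1) ω = (Q n ω) ^ 2)
    (hplus : ∀ n ω, B n ω = true →
      Q n ω ≤ Q (n + 1) ω ∧ Q (n + 1) ω ≤ 2 * Q n ω - (Q n ω) ^ 2) :
    ∀ᵐ ω ∂P, ∃ q : ℝ,
      Tendsto (fun n => Q n ω) atTop (nhds q) ∧ (q = 0 ∨ q = 1) := by
  classical
  have hQ0 : ∀ n ω, 0 ≤ Q n ω := fun n ω => (hbound n ω).1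
  have hQ1 : ∀ n ω, Q n ω ≤ 1 := fun n ω => (hbound n ω).2
  have hQsm : ∀ n, StronglyMeasurable[F n] (Q n) := hadapted.stronglyAdapted
  have hQmeas : ∀ n, Measurable (Q n) := fun n =>
    ((hQsm n).measurable).mono (F.le n) le_rfl
  have hQint : ∀ n, Integrable (Q n) P := fun n =>
    (integrable_const (1 : ℝ)).mono' (hQmeas n).aestronglyMeasurable
      (Filter.Eventually.of_forall fun ω => by
        rw [Real.norm_eq_abs, abs_le]
        exact ⟨by linarith [hQ0 n ω], hQ1 n ω⟩)
  -- the "variance" process g n = Q n (1 - Q n)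
  set g : ℕ → Ω → ℝ := fun n ω => Q n ω * (1 - Q n ω) with hgdef
  have hg0 : ∀ n ω, 0 ≤ g n ω := fun n ω =>
    mul_nonneg (hQ0 n ω) (by linarith [hQ1 n ω])
  have hg1 : ∀ n ω, g n ω ≤ 1 := fun n ω => by
    show Q n ω * (1 - Q n ω) ≤ 1
    nlinarith [hQ0 n ω, hQ1 n ω]
  have hgsm : ∀ n, StronglyMeasurable[F n] (g n) := fun n =>
    (hQsm n).mul (stronglyMeasurable_const.sub (hQsm n))
  have hgmeas : ∀ n, Measurable (g n) := fun n =>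
    ((hgsm n).measurable).mono (F.le n) le_rfl
  have hgint : ∀ n, Integrable (g n) P := fun n =>
    (integrable_const (1 : ℝ)).mono' (hgmeas n).aestronglyMeasurable
      (Filter.Eventually.of_forall fun ω => by
        rw [Real.norm_eq_abs, abs_le]
        exact ⟨by linarith [hg0 n ω], hg1 n ω⟩)
  -- the indicator of B n = true
  set X : ℕ → Ω → ℝ := fun n ω => if B n ω then 1 else 0 with hXdef
  have hXm' : ∀ n, Measurable[MeasurableSpace.comap (B n) ⊤] (B n) := fun n =>
    Measurable.of_comap_le le_rfl
  have hXsm : ∀ n, StronglyMeasurable[MeasurableSpace.comap (B n) ⊤] (X n) := fun n =>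
    (((measurable_from_top (f := fun b : Bool => if b then (1 : ℝ) else 0)).comp
      (hXm' n)).stronglyMeasurable : _)
  have hXmeas : ∀ n, Measurable (X n) := fun n =>
    ((measurable_from_top (f := fun b : Bool => if b then (1 : ℝ) else 0)).comp
      (hBmeas n) : _)
  have hXint : ∀ n, Integrable (X n) P := fun n =>
    (integrable_const (1 : ℝ)).mono' (hXmeas n).aestronglyMeasurable
      (Filter.Eventually.of_forall fun ω => by
        by_cases h : B n ω <;> simp [hXdef, h])
  have hXbound : ∀ n, ∀ᵐ ω ∂P, ‖X n ω‖ ≤ 1 :=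
    fun n => Filter.Eventually.of_forall fun ω => by
      by_cases h : B n ω <;> simp [hXdef, h]
  -- integral of the indicator is 1/2
  have hXint_eq : ∀ n, ∫ ω, X n ω ∂P = 1 / 2 := by
    intro n
    have hset : MeasurableSet {ω | B n ω = true} :=
      hBmeas n (show MeasurableSet[⊤] {x : Bool | x = true} from trivial)
    have : (fun ω => X n ω) = Set.indicator {ω | B n ω = true} (fun _ => (1 : ℝ)) := by
      funext ω
      by_cases h : B n ω <;> simp [hXdef, h, Set.indicator_apply, Set.mem_setOf_eq]
    rw [this, integral_indicator_const (1 : ℝ) hset, measureReal_def, hBhalf n]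
    norm_num [ENNReal.toReal_div]
  -- conditional expectation of the indicator is 1/2
  have hXcond : ∀ n, P[X n | F n] =ᵐ[P] fun _ => (1 : ℝ) / 2 := by
    intro n
    have := condExp_indep_eq (μ := P) ((hBmeas n).comap_le) (F.le n) (hXsm n) (hBindep n)
    calc P[X n | F n] =ᵐ[P] fun _ => ∫ ω, X n ω ∂P := this
    _ = fun _ => (1 : ℝ) / 2 := by rw [hXint_eq n]
  -- Q is a supermartingale
  have hcond : ∀ n, P[Q (n + 1) | F n] ≤ᵐ[P] Q n := by
    intro n
    -- pointwise bound: Q (n+1) ≤ (Q n - g n) + 2 • (g n * X n)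
    have hptw : Q (n + 1) ≤ (Q n - g n) + (2 : ℝ) • (g n * X n) := by
      intro ω
      by_cases h : B n ω
      · have h2 := (hplus n ω h).2
        simp only [Pi.add_apply, Pi.sub_apply, Pi.smul_apply, Pi.mul_apply, smul_eq_mul,
          hXdef, if_pos h, hgdef]
        nlinarith
      · have h2 := hminus n ω (by simpa using h)
        simp only [Pi.add_apply, Pi.sub_apply, Pi.smul_apply, Pi.mul_apply, smul_eq_mul,
          hXdef, if_neg h, hgdef]
        nlinarith
    have hUint : Integrable ((Q n - g n) + (2 : ℝ) • (g n * X n)) P := by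
      refine (((hQint n).sub (hgint n)).add (Integrable.smul _ ?_))
      exact (hXint n).bdd_mul (hgmeas n).aestronglyMeasurable
        (Filter.Eventually.of_forall fun ω => by
          rw [Real.norm_eq_abs, abs_le]
          exact ⟨by linarith [hg0 n ω], hg1 n ω⟩)
    have h1 : P[Q (n + 1) | F n] ≤ᵐ[P] P[(Q n - g n) + (2 : ℝ) • (g n * X n) | F n] :=
      condExp_mono (hQint (n + 1)) hUint (Filter.Eventually.of_forall hptw)
    -- compute the conditional expectation of the dominating function
    have hmulint : Integrable (g n * X n) P :=
      (hXint n).bdd_mul (hgmeas n).aestronglyMeasurable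
        (Filter.Eventually.of_forall fun ω => by
          rw [Real.norm_eq_abs, abs_le]
          exact ⟨by linarith [hg0 n ω], hg1 n ω⟩)
    have h2 : P[(Q n - g n) + (2 : ℝ) • (g n * X n) | F n]
        =ᵐ[P] P[Q n - g n | F n] + P[(2 : ℝ) • (g n * X n) | F n] :=
      condExp_add ((hQint n).sub (hgint n)) (hmulint.smul (2 : ℝ)) (F n)
    have h3 : P[Q n - g n | F n] =ᵐ[P] Q n - g n := by
      rw [condExp_of_stronglyMeasurable (F.le n) ((hQsm n).sub (hgsm n))
        ((hQint n).sub (hgint n))]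
    have h4 : P[(2 : ℝ) • (g n * X n) | F n] =ᵐ[P] (2 : ℝ) • P[g n * X n | F n] :=
      condExp_smul (2 : ℝ) (g n * X n) (F n)
    have h5 : P[g n * X n | F n] =ᵐ[P] g n * P[X n | F n] :=
      condExp_stronglyMeasurable_mul_of_bound (F.le n) (hgsm n) (hXint n) 1
        (Filter.Eventually.of_forall fun ω => by
          rw [Real.norm_eq_abs, abs_le]
          exact ⟨by linarith [hg0 n ω], hg1 n ω⟩)
    filter_upwards [h1, h2, h3, h4, h5, hXcond n] with ω h1ω h2ω h3ω h4ω h5ω hXω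
    have : (P[(Q n - g n) + (2 : ℝ) • (g n * X n) | F n]) ω = Q n ω := by
      rw [h2ω]
      simp only [Pi.add_apply, Pi.sub_apply, Pi.smul_apply, Pi.mul_apply, smul_eq_mul] at *
      rw [h3ω, h4ω, h5ω, hXω]
      ring
    calc (P[Q (n + 1) | F n]) ω ≤ (P[(Q n - g n) + (2 : ℝ) • (g n * X n) | F n]) ω := h1ω
    _ = Q n ω := this
  have hsuper : Supermartingale Q F P := supermartingale_nat hadapted.stronglyAdapted hQint hcond
  -- almost sure convergence
  have hsub : Submartingale (-Q) F P := hsuper.neg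
  have hbdd : ∀ n, eLpNorm ((-Q) n) 1 P ≤ (1 : ℝ≥0∞) := by
    intro n
    have := eLpNorm_le_of_ae_bound (p := 1) (μ := P) (C := 1)
      (f := (-Q) n) (Filter.Eventually.of_forall fun ω => by
        simp only [Pi.neg_apply, Real.norm_eq_abs, abs_neg, abs_le]
        exact ⟨by linarith [hQ0 n ω], hQ1 n ω⟩)
    simpa using this
  have htendneg : ∀ᵐ ω ∂P, Tendsto (fun n => (-Q) n ω) atTop
      (nhds (F.limitProcess (-Q) P ω)) :=
    hsub.ae_tendsto_limitProcess hbdd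
  set L : Ω → ℝ := fun ω => -(F.limitProcess (-Q) P ω) with hLdef
  have hLmeas : Measurable L := by
    have : StronglyMeasurable[⨆ n, F n] (F.limitProcess (-Q) P) :=
      Filtration.stronglyMeasurable_limitProcess
    exact (this.measurable.mono (iSup_le fun n => F.le n) le_rfl).neg
  have htendL : ∀ᵐ ω ∂P, Tendsto (fun n => Q n ω) atTop (nhds (L ω)) := by
    filter_upwards [htendneg] with ω hω
    have := hω.neg
    simpa [hLdef] using this
  -- bounds on L
  have hL01 : ∀ᵐ ω ∂P, 0 ≤ L ω ∧ L ω ≤ 1 := by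
    filter_upwards [htendL] with ω hω
    exact ⟨ge_of_tendsto' hω fun n => hQ0 n ω, le_of_tendsto' hω fun n => hQ1 n ω⟩
  -- ∫ g n → 0
  have hdiff_int : ∀ n, Integrable (fun ω => |Q (n + 1) ω - Q n ω|) P := fun n =>
    ((hQint (n + 1)).sub (hQint n)).abs
  have hdiff_tendsto : Tendsto (fun n => ∫ ω, |Q (n + 1) ω - Q n ω| ∂P) atTop (nhds 0) := by
    have h0 : ∫ ω, (0 : ℝ) ∂P = 0 := integral_zero Ω ℝ
    rw [← h0]
    refine tendsto_integral_of_dominated_convergence (fun _ => (2 : ℝ))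
      (fun n => (hdiff_int n).aestronglyMeasurable) (integrable_const 2) ?_ ?_
    · intro n
      refine Filter.Eventually.of_forall fun ω => ?_
      show ‖|Q (n + 1) ω - Q n ω|‖ ≤ 2
      rw [Real.norm_eq_abs, abs_abs, abs_le]
      constructor <;> nlinarith [hQ0 n ω, hQ1 n ω, hQ0 (n+1) ω, hQ1 (n+1) ω]
    · filter_upwards [htendL] with ω hω
      have h1 : Tendsto (fun n => Q (n + 1) ω) atTop (nhds (L ω)) :=
        hω.comp (tendsto_add_atTop_nat 1)
      have : Tendsto (fun n => Q (n + 1) ω - Q n ω) atTop (nhds (L ω - L ω)) := h1.sub hω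
      rw [sub_self] at this
      simpa using this.abs
  -- key inequality : ∫ g n ≤ 2 * ∫ |Q (n+1) - Q n|
  have hkey : ∀ n, ∫ ω, g n ω ∂P ≤ 2 * ∫ ω, |Q (n + 1) ω - Q n ω| ∂P := by
    intro n
    -- indicator of B n = false
    set Y : Ω → ℝ := fun ω => if B n ω then 0 else 1 with hYdef
    have hYm' : Measurable[MeasurableSpace.comap (B n) ⊤] Y :=
      ((measurable_from_top (f := fun b : Bool => if b then (0 : ℝ) else 1)).comp
        (hXm' n) : _)
    have hYmeas : Measurable Y :=
      ((measurable_from_top (f := fun b : Bool => if b then (0 : ℝ) else 1)).comp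
        (hBmeas n) : _)
    have hYint : Integrable Y P :=
      (integrable_const (1 : ℝ)).mono' hYmeas.aestronglyMeasurable
        (Filter.Eventually.of_forall fun ω => by
          by_cases h : B n ω <;> simp [hYdef, h])
    have hindep : IndepFun Y (g n) P := by
      rw [IndepFun_iff_Indep]
      exact indep_of_indep_of_le_right
        (indep_of_indep_of_le_left (hBindep n) hYm'.comap_le)
        ((hgsm n).measurable).comap_le
    have hmul : ∫ ω, Y ω * g n ω ∂P = (∫ ω, Y ω ∂P) * ∫ ω, g n ω ∂P :=
      hindep.integral_mul_eq_mul_integral hYint.aestronglyMeasurable (hgint n).aestronglyMeasurable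
    have hYint_eq : ∫ ω, Y ω ∂P = 1 / 2 := by
      have hset : MeasurableSet {ω | B n ω = true} :=
        hBmeas n (show MeasurableSet[⊤] {x : Bool | x = true} from trivial)
      have : (fun ω => Y ω) = Set.indicator {ω | B n ω = true}ᶜ (fun _ => (1 : ℝ)) := by
        funext ω
        by_cases h : B n ω <;>
          simp [hYdef, h, Set.indicator_apply, Set.mem_setOf_eq]
      have h22 : (2 : ℝ≥0∞) / 2 = 1 := ENNReal.div_self (by norm_num) (by norm_num)
      have hc : (1 : ℝ≥0∞) - 1 / 2 = 1 / 2 :=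
        ENNReal.sub_eq_of_eq_add (by norm_num) (by
          rw [ENNReal.div_add_div_same]
          norm_num [h22])
      rw [this, integral_indicator_const (1 : ℝ) hset.compl, measureReal_def,
        measure_compl hset (measure_ne_top P _), measure_univ, hBhalf n, hc]
      norm_num [ENNReal.toReal_div]
    have hptw : ∀ ω, Y ω * g n ω ≤ |Q (n + 1) ω - Q n ω| := by
      intro ω
      by_cases h : B n ω
      · simp only [hYdef, if_pos h, zero_mul]
        exact abs_nonneg _
      · have h2 := hminus n ω (by simpa using h)
        simp only [hYdef, if_neg h, one_mul, h2, hgdef]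
        rw [abs_sub_comm, abs_of_nonneg
          (show (0 : ℝ) ≤ Q n ω - Q n ω ^ 2 by nlinarith [hQ0 n ω, hQ1 n ω])]
        nlinarith [hQ0 n ω, hQ1 n ω]
    have hmulint : Integrable (fun ω => Y ω * g n ω) P :=
      (hgint n).bdd_mul hYmeas.aestronglyMeasurable
        (Filter.Eventually.of_forall fun ω => show ‖Y ω‖ ≤ 1 by
          by_cases h : B n ω <;> simp [hYdef, h])
    have hle : ∫ ω, Y ω * g n ω ∂P ≤ ∫ ω, |Q (n + 1) ω - Q n ω| ∂P :=
      integral_mono hmulint (hdiff_int n) hptw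
    rw [hmul, hYint_eq] at hle
    linarith
  have hg_tendsto : Tendsto (fun n => ∫ ω, g n ω ∂P) atTop (nhds 0) := by
    have h2 : Tendsto (fun n => 2 * ∫ ω, |Q (n + 1) ω - Q n ω| ∂P) atTop (nhds 0) := by
      have := hdiff_tendsto.const_mul (2 : ℝ)
      simpa using this
    refine tendsto_of_tendsto_of_tendsto_of_le_of_le tendsto_const_nhds h2 ?_ hkey
    exact fun n => integral_nonneg fun ω => hg0 n ω
  -- ∫ g n → ∫ L (1 - L), hence ∫ L (1 - L) = 0
  have hLint : Integrable (fun ω => L ω * (1 - L ω)) P := by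
    refine (integrable_const (1 : ℝ)).mono'
      ((hLmeas.mul (measurable_const.sub hLmeas)).aestronglyMeasurable) ?_
    filter_upwards [hL01] with ω hω
    show ‖L ω * (1 - L ω)‖ ≤ 1
    rw [Real.norm_eq_abs, abs_le]
    constructor <;> nlinarith [hω.1, hω.2]
  have hgL : Tendsto (fun n => ∫ ω, g n ω ∂P) atTop (nhds (∫ ω, L ω * (1 - L ω) ∂P)) := by
    refine tendsto_integral_of_dominated_convergence (fun _ => (1 : ℝ))
      (fun n => (hgmeas n).aestronglyMeasurable) (integrable_const 1) ?_ ?_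
    · intro n
      refine Filter.Eventually.of_forall fun ω => ?_
      show ‖g n ω‖ ≤ 1
      rw [Real.norm_eq_abs, abs_le]
      exact ⟨by linarith [hg0 n ω], hg1 n ω⟩
    · filter_upwards [htendL] with ω hω
      exact (hω.mul (tendsto_const_nhds.sub hω))
  have hzero : ∫ ω, L ω * (1 - L ω) ∂P = 0 :=
    tendsto_nhds_unique hgL hg_tendsto
  have hae : ∀ᵐ ω ∂P, L ω * (1 - L ω) = 0 := by
    have hnn : 0 ≤ᵐ[P] fun ω => L ω * (1 - L ω) := by
      filter_upwards [hL01] with ω hω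
      exact mul_nonneg hω.1 (by linarith [hω.2])
    have := (integral_eq_zero_iff_of_nonneg_ae hnn hLint).1 hzero
    filter_upwards [this] with ω hω
    exact hω
  filter_upwards [htendL, hae] with ω hω hz
  refine ⟨L ω, hω, ?_⟩
  rcases mul_eq_zero.1 hz with h | h
  · exact Or.inl h
  · exact Or.inr (by linarith)
end

section
/- Let (R_n) be a stochastic process adapted to a filtration (F_n), taking values in [0,1], such that conditionally on F_n: with probability 1/2, R_{n+1} = 2R_n − R_n², and with probability 1/2, R_{n+1} ≥ R_n². Then (R_n) is a bounded submartingale, converges almost surely, and its limit R_∞ ∈ {0,1} almost surely. -/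
open MeasureTheory ProbabilityTheory Filter

private lemma aux_integrable_of_bound {Ω : Type*} {m : MeasurableSpace Ω} (P : Measure Ω)
    [IsFiniteMeasure P] {f : Ω → ℝ} (hf : AEStronglyMeasurable f P) (C : ℝ)
    (h : ∀ ω, |f ω| ≤ C) : MeasureTheory.Integrable f P :=
  (integrable_const C).mono' hf (Filter.Eventually.of_forall fun ω => by
    simpa [Real.norm_eq_abs] using h ω)

/-- The process `R_n = P[L_n = 1] ∈ [0,1]` with `R_{n+1} = 2R_n − R_n²` w.p. `1/2` and
`R_{n+1} ≥ R_n²` w.p. `1/2` is a bounded submartingale converging a.s. to `{0,1}`. -/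
theorem R_process_polarizes
    {Ω : Type*} {m : MeasurableSpace Ω} (P : Measure Ω) [IsProbabilityMeasure P]
    (F : Filtration ℕ m) (R : ℕ → Ω → ℝ)
    (hadapted : Adapted F R)
    (hbound : ∀ n ω, R n ω ∈ Set.Icc (0 : ℝ) 1)
    (B : ℕ → Ω → Bool) (hBmeas : ∀ n, Measurable (B n))
    (hBhalf : ∀ n, P {ω | B n ω = true} = 1 / 2)
    (hBindep : ∀ n, Indep (MeasurableSpace.comap (B n) ⊤) (F n) P)
    (hminus : ∀ n ω, B n ω = false → R (n + 1) ω = 2 * R n ω - (R n ω) ^ 2)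
    (hplus : ∀ n ω, B n ω = true → (R n ω) ^ 2 ≤ R (n + 1) ω) :
    Submartingale R F P ∧
      ∀ᵐ ω ∂P, ∃ r : ℝ,
        Tendsto (fun n => R n ω) atTop (nhds r) ∧ (r = 0 ∨ r = 1) := by
  -- basic measurability and integrability
  have hRmeas : ∀ n, StronglyMeasurable[m] (R n) := fun n => (hadapted n).stronglyMeasurable.mono (F.le n)
  have hRint : ∀ n, Integrable (R n) P := fun n =>
    aux_integrable_of_bound P (hRmeas n).aestronglyMeasurable 1 (fun ω => by
      have h := hbound n ω; rw [abs_le]; exact ⟨by linarith [h.1], h.2⟩)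
  -- the sigma-algebra generated by B n
  have hmBle : ∀ n, MeasurableSpace.comap (B n) ⊤ ≤ m := by
    intro n
    refine Measurable.comap_le (m₂ := ⊤) ?_
    intro s _
    exact hBmeas n (s.to_countable.measurableSet)
  -- indicators of the coin flip
  set X : ℕ → Ω → ℝ := fun n ω => if B n ω = false then (1 : ℝ) else 0 with hXdef
  set X' : ℕ → Ω → ℝ := fun n ω => if B n ω = true then (1 : ℝ) else 0 with hX'def
  have hXcomp : ∀ n, X n = (fun b => if b = false then (1 : ℝ) else 0) ∘ (B n) := fun n => rfl
  have hX'comp : ∀ n, X' n = (fun b => if b = true then (1 : ℝ) else 0) ∘ (B n) := fun n => rfl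
  have hXm : ∀ n, Measurable[MeasurableSpace.comap (B n) ⊤] (X n) := by
    intro n
    rw [hXcomp]
    exact Measurable.comp (by intro s _; trivial) (Measurable.of_comap_le le_rfl)
  have hX'm : ∀ n, Measurable[MeasurableSpace.comap (B n) ⊤] (X' n) := by
    intro n
    rw [hX'comp]
    exact Measurable.comp (by intro s _; trivial) (Measurable.of_comap_le le_rfl)
  have hXmm : ∀ n, Measurable (X n) := fun n => (hXm n).mono (hmBle n) le_rfl
  have hX'mm : ∀ n, Measurable (X' n) := fun n => (hX'm n).mono (hmBle n) le_rfl
  -- the probabilities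
  have hPtrue : ∀ n, P {ω | B n ω = true} = 1 / 2 := hBhalf
  have hPfalse : ∀ n, P {ω | B n ω = false} = 1 / 2 := by
    intro n
    have hc : {ω | B n ω = false} = {ω | B n ω = true}ᶜ := by
      ext ω; simp
    have hmeasT : MeasurableSet {ω | B n ω = true} := hBmeas n (measurableSet_singleton true)
    rw [hc, measure_compl hmeasT (measure_ne_top _ _), measure_univ, hBhalf n]
    rw [ENNReal.sub_half ENNReal.one_ne_top]
  -- integrals of indicators
  have hXint : ∀ n, ∫ ω, X n ω ∂P = 1 / 2 := by
    intro n
    have hXi : X n = Set.indicator {ω | B n ω = false} (fun _ => (1 : ℝ)) := by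
      funext ω; by_cases h : B n ω = false <;> simp [hXdef, h, Set.indicator]
    have hmf : MeasurableSet {ω | B n ω = false} := hBmeas n (measurableSet_singleton false)
    rw [hXi, integral_indicator_const (1 : ℝ) hmf, measureReal_def, hPfalse n]
    simp [ENNReal.toReal_div]
  have hX'int : ∀ n, ∫ ω, X' n ω ∂P = 1 / 2 := by
    intro n
    have hXi : X' n = Set.indicator {ω | B n ω = true} (fun _ => (1 : ℝ)) := by
      funext ω; by_cases h : B n ω = true <;> simp [hX'def, h, Set.indicator]
    have hmf : MeasurableSet {ω | B n ω = true} := hBmeas n (measurableSet_singleton true)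
    rw [hXi, integral_indicator_const (1 : ℝ) hmf, measureReal_def, hPtrue n]
    simp [ENNReal.toReal_div]
  have hXintg : ∀ n, Integrable (X n) P := fun n =>
    aux_integrable_of_bound P (hXmm n).aestronglyMeasurable 1 (fun ω => by
      by_cases h : B n ω = false <;> simp [hXdef, h])
  have hX'intg : ∀ n, Integrable (X' n) P := fun n =>
    aux_integrable_of_bound P (hX'mm n).aestronglyMeasurable 1 (fun ω => by
      by_cases h : B n ω = true <;> simp [hX'def, h])
  -- conditional expectations of indicators
  have hXce : ∀ n, P[X n|F n] =ᵐ[P] fun _ => (1 / 2 : ℝ) := by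
    intro n
    have h := condExp_indep_eq (hmBle n) (F.le n) (hXm n).stronglyMeasurable (hBindep n)
      (μ := P) (f := X n)
    refine h.trans ?_
    rw [hXint n]
  have hX'ce : ∀ n, P[X' n|F n] =ᵐ[P] fun _ => (1 / 2 : ℝ) := by
    intro n
    have h := condExp_indep_eq (hmBle n) (F.le n) (hX'm n).stronglyMeasurable (hBindep n)
      (μ := P) (f := X' n)
    refine h.trans ?_
    rw [hX'int n]
  -- the submartingale property
  have key1 : ∀ n, R n ≤ᵐ[P] P[R (n + 1)|F n] := by
    intro n
    set g₁ : Ω → ℝ := fun ω => 2 * R n ω - R n ω ^ 2 with hg₁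
    set g₂ : Ω → ℝ := fun ω => R n ω ^ 2 with hg₂
    have hg₁sm : StronglyMeasurable[F n] g₁ :=
      (stronglyMeasurable_const.mul (hadapted n).stronglyMeasurable).sub ((hadapted n).stronglyMeasurable.pow 2)
    have hg₂sm : StronglyMeasurable[F n] g₂ := (hadapted n).stronglyMeasurable.pow 2
    have hg₁b : ∀ ω, |g₁ ω| ≤ 3 := by
      intro ω; have h := hbound n ω
      show |2 * R n ω - R n ω ^ 2| ≤ 3
      rw [abs_le]
      constructor <;> nlinarith [h.1, h.2, sq_nonneg (R n ω), sq_nonneg (1 - R n ω), sq_nonneg (1 + R n ω)]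
    have hg₂b : ∀ ω, |g₂ ω| ≤ 1 := by
      intro ω; have h := hbound n ω
      show |R n ω ^ 2| ≤ 1
      rw [abs_le]
      constructor <;> nlinarith [h.1, h.2, sq_nonneg (R n ω), sq_nonneg (1 - R n ω), sq_nonneg (1 + R n ω)]
    have hXb : ∀ ω, |X n ω| ≤ 1 := fun ω => by by_cases h : B n ω = false <;> simp [hXdef, h]
    have hX'b : ∀ ω, |X' n ω| ≤ 1 := fun ω => by by_cases h : B n ω = true <;> simp [hX'def, h]
    have hint1 : Integrable (g₁ * X n) P :=
      aux_integrable_of_bound P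
        ((hg₁sm.mono (F.le n)).aestronglyMeasurable.mul (hXmm n).aestronglyMeasurable) 3
        (fun ω => by
          have := abs_mul (g₁ ω) (X n ω) ▸ mul_le_mul (hg₁b ω) (hXb ω) (abs_nonneg _)
            (le_trans (abs_nonneg _) (hg₁b ω))
          calc |(g₁ * X n) ω| = |g₁ ω| * |X n ω| := abs_mul _ _
            _ ≤ 3 * 1 := mul_le_mul (hg₁b ω) (hXb ω) (abs_nonneg _) (by norm_num)
            _ = 3 := by norm_num)
    have hint2 : Integrable (g₂ * X' n) P :=
      aux_integrable_of_bound P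
        ((hg₂sm.mono (F.le n)).aestronglyMeasurable.mul (hX'mm n).aestronglyMeasurable) 1
        (fun ω => by
          calc |(g₂ * X' n) ω| = |g₂ ω| * |X' n ω| := abs_mul _ _
            _ ≤ 1 * 1 := mul_le_mul (hg₂b ω) (hX'b ω) (abs_nonneg _) (by norm_num)
            _ = 1 := by norm_num)
    have hce : P[g₁ * X n + g₂ * X' n|F n] =ᵐ[P] R n := by
      have h0 : P[g₁ * X n + g₂ * X' n|F n]
          =ᵐ[P] P[g₁ * X n|F n] + P[g₂ * X' n|F n] := condExp_add hint1 hint2 _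
      have h1 : P[g₁ * X n|F n] =ᵐ[P] g₁ * P[X n|F n] :=
        condExp_mul_of_stronglyMeasurable_left hg₁sm hint1 (hXintg n)
      have h2 : P[g₂ * X' n|F n] =ᵐ[P] g₂ * P[X' n|F n] :=
        condExp_mul_of_stronglyMeasurable_left hg₂sm hint2 (hX'intg n)
      refine h0.trans ?_
      have h1' : g₁ * P[X n|F n] =ᵐ[P] fun ω => g₁ ω * (1 / 2) := by
        filter_upwards [hXce n] with ω hω
        simp [hω]
      have h2' : g₂ * P[X' n|F n] =ᵐ[P] fun ω => g₂ ω * (1 / 2) := by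
        filter_upwards [hX'ce n] with ω hω
        simp [hω]
      refine ((h1.trans h1').add (h2.trans h2')).trans ?_
      filter_upwards with ω
      simp only [Pi.add_apply, hg₁, hg₂]
      ring
    have hle : ∀ ω, (g₁ * X n + g₂ * X' n) ω ≤ R (n + 1) ω := by
      intro ω
      simp only [Pi.add_apply, Pi.mul_apply, hg₁, hg₂, hXdef, hX'def]
      cases hB : B n ω with
      | false =>
        have := hminus n ω hB
        simp only [hB]
        norm_num
        linarith [this]
      | true =>
        have := hplus n ω hB
        simp only [hB]
        norm_num
        linarith [this]
    have hmono : P[g₁ * X n + g₂ * X' n|F n] ≤ᵐ[P] P[R (n + 1)|F n] :=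
      condExp_mono (hint1.add hint2) (hRint (n + 1)) (Filter.Eventually.of_forall hle)
    filter_upwards [hce, hmono] with ω h1 h2
    rw [← h1]; exact h2
  have hsub : Submartingale R F P := submartingale_nat hadapted.stronglyAdapted hRint key1
  refine ⟨hsub, ?_⟩
  -- convergence
  have hbdd : ∀ n, eLpNorm (R n) 1 P ≤ (1 : ENNReal) := by
    intro n
    have h := eLpNorm_le_of_ae_bound (μ := P) (p := 1) (f := R n) (C := 1)
      (Filter.Eventually.of_forall fun ω => by
        have h := hbound n ω
        rw [Real.norm_eq_abs, abs_le]; exact ⟨by linarith [h.1], h.2⟩)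
    simpa using h
  set g : Ω → ℝ := F.limitProcess R P with hgdef
  have htends : ∀ᵐ ω ∂P, Tendsto (fun n => R n ω) atTop (nhds (g ω)) :=
    hsub.ae_tendsto_limitProcess hbdd
  have hgsm : StronglyMeasurable[m] g := Filtration.stronglyMeasurable_limit_process'
  -- the integral inequality
  set Y : ℕ → Ω → ℝ := fun n ω => R n ω * (1 - R n ω) with hYdef
  have hYm : ∀ n, StronglyMeasurable[m] (Y n) :=
    fun n => (hRmeas n).mul (stronglyMeasurable_const.sub (hRmeas n))
  have hYb : ∀ n ω, |Y n ω| ≤ 1 := by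
    intro n ω
    have h := hbound n ω
    show |R n ω * (1 - R n ω)| ≤ 1
    rw [abs_le]
    constructor
    · nlinarith [mul_nonneg h.1 (sub_nonneg.2 h.2)]
    · nlinarith [h.1, h.2]
  have hYint : ∀ n, Integrable (Y n) P := fun n =>
    aux_integrable_of_bound P (hYm n).aestronglyMeasurable 1 (hYb n)
  have key2 : ∀ n, ∫ ω, Y n ω ∂P ≤ 2 * ∫ ω, |R (n + 1) ω - R n ω| ∂P := by
    intro n
    have hXY : IndepFun (X n) (Y n) P := by
      rw [IndepFun_iff_Indep]
      have h1 : MeasurableSpace.comap (X n) inferInstance ≤ MeasurableSpace.comap (B n) ⊤ := by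
        rw [hXcomp, ← MeasurableSpace.comap_comp]
        exact MeasurableSpace.comap_mono le_top
      have h2 : MeasurableSpace.comap (Y n) inferInstance ≤ F n :=
        Measurable.comap_le ((hadapted n).mul
          (measurable_const.sub (hadapted n)))
      exact indep_of_indep_of_le_right (indep_of_indep_of_le_left (hBindep n) h1) h2
    have hprod : ∫ ω, (X n * Y n) ω ∂P = (1 / 2) * ∫ ω, Y n ω ∂P := by
      rw [hXY.integral_mul_eq_mul_integral (hXintg n).aestronglyMeasurable (hYint n).aestronglyMeasurable, hXint n]
    have hptwise : ∀ ω, (X n * Y n) ω ≤ |R (n + 1) ω - R n ω| := by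
      intro ω
      show X n ω * Y n ω ≤ |R (n + 1) ω - R n ω|
      have hY : Y n ω = R n ω * (1 - R n ω) := rfl
      cases hB : B n ω with
      | true =>
        have hX0 : X n ω = 0 := by simp [hXdef, hB]
        rw [hX0, zero_mul]
        exact abs_nonneg _
      | false =>
        have hX1 : X n ω = 1 := by simp [hXdef, hB]
        have hmn := hminus n ω hB
        have h := hbound n ω
        have heq : R (n + 1) ω - R n ω = R n ω * (1 - R n ω) := by rw [hmn]; ring
        rw [hX1, one_mul, hY, heq,
          abs_of_nonneg (mul_nonneg h.1 (by linarith [h.2]))]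
    have hXYint : Integrable (X n * Y n) P :=
      aux_integrable_of_bound P ((hXmm n).aestronglyMeasurable.mul
        (hYm n).aestronglyMeasurable) 1 (fun ω => by
          calc |(X n * Y n) ω| = |X n ω| * |Y n ω| := abs_mul _ _
            _ ≤ 1 * 1 := mul_le_mul (by by_cases h : B n ω = false <;> simp [hXdef, h])
                (hYb n ω) (abs_nonneg _) (by norm_num)
            _ = 1 := by norm_num
          )
    have habsint : Integrable (fun ω => |R (n + 1) ω - R n ω|) P :=
      ((hRint (n + 1)).sub (hRint n)).abs
    have hineq : ∫ ω, (X n * Y n) ω ∂P ≤ ∫ ω, |R (n + 1) ω - R n ω| ∂P :=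
      integral_mono hXYint habsint hptwise
    rw [hprod] at hineq
    linarith
  -- limit of the integrals
  have hgb : ∀ᵐ ω ∂P, g ω ∈ Set.Icc (0 : ℝ) 1 := by
    filter_upwards [htends] with ω hω
    exact ⟨ge_of_tendsto' hω (fun n => (hbound n ω).1),
      le_of_tendsto' hω (fun n => (hbound n ω).2)⟩
  have hGm : StronglyMeasurable[m] (fun ω => g ω * (1 - g ω)) :=
    hgsm.mul (stronglyMeasurable_const.sub hgsm)
  have hGint : Integrable (fun ω => g ω * (1 - g ω)) P := by
    refine (integrable_const (1 : ℝ)).mono' hGm.aestronglyMeasurable ?_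
    filter_upwards [hgb] with ω hω
    rw [Real.norm_eq_abs, abs_le]
    constructor
    · nlinarith [mul_nonneg hω.1 (sub_nonneg.2 hω.2)]
    · nlinarith [hω.1, hω.2]
  have hlim1 : Tendsto (fun n => ∫ ω, Y n ω ∂P) atTop (nhds (∫ ω, g ω * (1 - g ω) ∂P)) := by
    refine tendsto_integral_of_dominated_convergence (fun _ => (1 : ℝ))
      (fun n => (hYm n).aestronglyMeasurable) (integrable_const 1)
      (fun n => Filter.Eventually.of_forall fun ω => by
        rw [Real.norm_eq_abs]; exact hYb n ω) ?_
    filter_upwards [htends] with ω hω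
    exact hω.mul (tendsto_const_nhds.sub hω)
  have hlim2 : Tendsto (fun n => ∫ ω, |R (n + 1) ω - R n ω| ∂P) atTop (nhds 0) := by
    have h0 : (0 : ℝ) = ∫ (_ : Ω), (0 : ℝ) ∂P := by simp
    rw [h0]
    refine tendsto_integral_of_dominated_convergence (fun _ => (2 : ℝ))
      (fun n => (continuous_abs.comp_stronglyMeasurable
        ((hRmeas (n + 1)).sub (hRmeas n))).aestronglyMeasurable)
      (integrable_const 2)
      (fun n => Filter.Eventually.of_forall fun ω => by
        have h1 := hbound (n + 1) ω
        have h2 := hbound n ω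
        rw [Real.norm_eq_abs, abs_abs, abs_le]
        constructor
        · show -(2 : ℝ) ≤ R (n + 1) ω - R n ω
          nlinarith [h1.1, h1.2, h2.1, h2.2]
        · show R (n + 1) ω - R n ω ≤ (2 : ℝ)
          nlinarith [h1.1, h1.2, h2.1, h2.2]) ?_
    filter_upwards [htends] with ω hω
    have h1 : Tendsto (fun n => R (n + 1) ω) atTop (nhds (g ω)) :=
      hω.comp (tendsto_add_atTop_nat 1)
    have := (h1.sub hω).abs
    simpa using this
  have hnonneg : 0 ≤ ∫ ω, g ω * (1 - g ω) ∂P := by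
    refine integral_nonneg_of_ae ?_
    filter_upwards [hgb] with ω hω
    exact mul_nonneg hω.1 (sub_nonneg.2 hω.2)
  have hle0 : ∫ ω, g ω * (1 - g ω) ∂P ≤ 0 := by
    have h2 : Tendsto (fun n => 2 * ∫ ω, |R (n + 1) ω - R n ω| ∂P) atTop (nhds 0) := by
      have := hlim2.const_mul (2 : ℝ)
      simpa using this
    exact le_of_tendsto_of_tendsto' hlim1 h2 key2
  have hzero : ∫ ω, g ω * (1 - g ω) ∂P = 0 := le_antisymm hle0 hnonneg
  have haezero : (fun ω => g ω * (1 - g ω)) =ᵐ[P] 0 := by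
    refine (integral_eq_zero_iff_of_nonneg_ae ?_ hGint).1 hzero
    filter_upwards [hgb] with ω hω
    exact mul_nonneg hω.1 (sub_nonneg.2 hω.2)
  filter_upwards [htends, haezero] with ω hω h0
  refine ⟨g ω, hω, ?_⟩
  have h0' : g ω * (1 - g ω) = 0 := h0
  rcases mul_eq_zero.1 h0' with h | h
  · exact Or.inl h
  · exact Or.inr (by linarith [sub_eq_zero.1 h])
end
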